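/- arXiv:2409.07332 — 5 statements merged into one kernel-verified Lean document; each statement's English description precedes it below -/
import Mathlib

section
/- For every integer n ≥ 1, there exists a piecewise polynomial with 2(n−1) pieces, each of degree at most d, approximating log x on [2^{-n+1}, 1] with uniform error at most 2^{-d-1}/(d+1). -/
open Real

section LogTaylorAux
open Set Polynomial Nat

lemma iteratedDerivWithin_log_aux {A B : ℝ} (hA : 0 < A) (hAB : A < B) :
    ∀ (k : ℕ), ∀ x ∈ Set.Icc A B,
      iteratedDerivWithin (k + 1) Real.log (Set.Icc A B) x = (-1) ^ k * (k ! : ℝ) / x ^ (k + 1) := by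
  have hu : UniqueDiffOn ℝ (Set.Icc A B) := uniqueDiffOn_Icc hAB
  intro k
  induction k with
  | zero =>
    intro x hx
    have hx0 : x ≠ 0 := (lt_of_lt_of_le hA hx.1).ne'
    rw [iteratedDerivWithin_one,
      (Real.differentiableAt_log hx0).derivWithin (hu x hx), Real.deriv_log]
    norm_num
  | succ k ih =>
    intro x hx
    have hx0 : x ≠ 0 := (lt_of_lt_of_le hA hx.1).ne'
    rw [iteratedDerivWithin_succ]
    have hEq : Set.EqOn (iteratedDerivWithin (k + 1) Real.log (Set.Icc A B))
        (fun y : ℝ => ((-1 : ℝ) ^ k * (k ! : ℝ)) * y ^ (-(k + 1 : ℕ) : ℤ)) (Set.Icc A B) := by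
      intro y hy
      have hy0 : y ≠ 0 := (lt_of_lt_of_le hA hy.1).ne'
      simp only [zpow_neg, zpow_natCast]
      rw [ih y hy, div_eq_mul_inv]
    rw [derivWithin_congr hEq (hEq hx)]
    have hdiff : DifferentiableAt ℝ (fun y : ℝ => y ^ (-(k + 1 : ℕ) : ℤ)) x :=
      differentiableAt_zpow.mpr (Or.inl hx0)
    rw [(hdiff.const_mul _).derivWithin (hu x hx), deriv_const_mul _ hdiff, deriv_zpow]
    have h2 : x ^ ((-(k + 1 : ℕ) : ℤ) - 1) = (x ^ (k + 2))⁻¹ := by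
      rw [show ((-(k + 1 : ℕ) : ℤ) - 1) = -(k + 2 : ℕ) by push_cast; ring, zpow_neg, zpow_natCast]
    have h3 : ((k + 1)! : ℝ) = (k + 1) * (k ! : ℝ) := by exact_mod_cast Nat.factorial_succ k
    rw [h2, h3]
    have hxp : (x : ℝ) ^ (k + 2) ≠ 0 := pow_ne_zero _ hx0
    push_cast
    field_simp
    ring

lemma log_taylor_bound (d : ℕ) {a b : ℝ} (ha : 0 < a) (hab : a < b) :
    ∃ P : Polynomial ℝ, P.degree ≤ d ∧
      ∀ x ∈ Set.Icc a b, |Real.log x - P.eval x| ≤ ((b - a) / a) ^ (d + 1) / ((d : ℝ) + 1) := by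
  classical
  set c : ℕ → ℝ := fun k => match k with
    | 0 => Real.log a
    | (k + 1) => (-1) ^ k * (k ! : ℝ) / a ^ (k + 1) / ((k + 1)! : ℝ) with hc
  refine ⟨∑ k ∈ Finset.range (d + 1), Polynomial.C (c k) * (Polynomial.X - Polynomial.C a) ^ k,
    ?_, ?_⟩
  · refine (Polynomial.degree_sum_le _ _).trans ?_
    refine Finset.sup_le fun k hk => ?_
    refine (Polynomial.degree_mul_le _ _).trans ?_
    have h1 : (Polynomial.C (c k)).degree ≤ 0 := Polynomial.degree_C_le
    have h2 : ((Polynomial.X - Polynomial.C a) ^ k).degree ≤ (k : WithBot ℕ) := by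
      refine (Polynomial.degree_pow_le _ _).trans ?_
      rw [Polynomial.degree_X_sub_C]
      simp
    refine le_trans (add_le_add h1 h2) ?_
    rw [zero_add]
    exact_mod_cast Nat.lt_succ_iff.mp (Finset.mem_range.mp hk)
  · intro x hx
    have hba : (0 : ℝ) ≤ b - a := sub_nonneg.mpr hab.le
    have hB : (0 : ℝ) ≤ ((b - a) / a) ^ (d + 1) / ((d : ℝ) + 1) :=
      div_nonneg (pow_nonneg (div_nonneg hba ha.le) _) (by positivity)
    have heval : ∀ y : ℝ, (∑ k ∈ Finset.range (d + 1),
        Polynomial.C (c k) * (Polynomial.X - Polynomial.C a) ^ k).eval y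
        = ∑ k ∈ Finset.range (d + 1), c k * (y - a) ^ k := by
      intro y; simp [Polynomial.eval_finset_sum]
    rcases eq_or_lt_of_le hx.1 with heq | hax
    · rw [heval]
      have hsum : ∑ k ∈ Finset.range (d + 1), c k * (x - a) ^ k = c 0 := by
        rw [Finset.sum_eq_single 0]
        · simp
        · intro k hk hk0
          rcases Nat.exists_eq_succ_of_ne_zero hk0 with ⟨m, rfl⟩
          rw [← heq]
          simp
        · simp
      rw [hsum, ← heq]
      simpa [hc] using hB
    · -- a < x
      have hsub : Set.Icc a x ⊆ ({0}ᶜ : Set ℝ) := fun y hy => by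
        have : 0 < y := lt_of_lt_of_le ha hy.1
        simp [this.ne']
      have hcd : ContDiffOn ℝ d Real.log (Set.Icc a x) := Real.contDiffOn_log.mono hsub
      have hcd1 : ContDiffOn ℝ (d + 1 : ℕ) Real.log (Set.Icc a x) :=
        Real.contDiffOn_log.mono hsub
      have hdiffOn : DifferentiableOn ℝ (iteratedDerivWithin d Real.log (Set.Icc a x))
          (Set.Ioo a x) := by
        refine (hcd1.differentiableOn_iteratedDerivWithin ?_ (uniqueDiffOn_Icc hax)).mono
          Set.Ioo_subset_Icc_self
        exact_mod_cast Nat.lt_succ_self d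
      have hlag := taylor_mean_remainder_lagrange (n := d) hax.ne (by rw [Set.uIcc_of_lt hax]; exact hcd)
        (by rw [Set.uIcc_of_lt hax, Set.uIoo_of_lt hax]; exact hdiffOn)
      rw [Set.uIcc_of_lt hax, Set.uIoo_of_lt hax] at hlag
      obtain ⟨x', hx', hrem⟩ := hlag
      have hTP : taylorWithinEval Real.log d (Set.Icc a x) a x
          = ∑ k ∈ Finset.range (d + 1), c k * (x - a) ^ k := by
        rw [taylor_within_apply]
        refine Finset.sum_congr rfl fun k hk => ?_
        match k with
        | 0 => simp [hc]
        | (m + 1) =>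
          rw [iteratedDerivWithin_log_aux ha hax m a (Set.mem_Icc.mpr ⟨le_refl a, hax.le⟩)]
          have h3 : ((m + 1)! : ℝ) ≠ 0 := by positivity
          rw [smul_eq_mul, hc]
          field_simp
      have hd1 : iteratedDerivWithin (d + 1) Real.log (Set.Icc a x) x'
          = (-1) ^ d * (d ! : ℝ) / x' ^ (d + 1) :=
        iteratedDerivWithin_log_aux ha hax d x' (Set.Ioo_subset_Icc_self hx')
      rw [heval, ← hTP, hrem, hd1]
      have hx'a : a < x' := hx'.1
      have hx'0 : (0 : ℝ) < x' := lt_trans ha hx'a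
      have habs : |(-1 : ℝ) ^ d * (d ! : ℝ) / x' ^ (d + 1) * (x - a) ^ (d + 1) / ((d + 1)! : ℝ)|
          = (d ! : ℝ) / x' ^ (d + 1) * (x - a) ^ (d + 1) / ((d + 1)! : ℝ) := by
        rw [abs_div, abs_mul, abs_div, abs_mul, abs_pow, abs_neg, abs_one, one_pow, one_mul,
          abs_of_nonneg (by positivity : (0:ℝ) ≤ (d ! : ℝ)),
          abs_of_nonneg (by positivity : (0:ℝ) ≤ x' ^ (d + 1)),
          abs_of_nonneg (by positivity : (0:ℝ) ≤ ((d + 1)! : ℝ)),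
          abs_of_nonneg (pow_nonneg (sub_nonneg.mpr hax.le) _)]
      rw [habs]
      have hstep : (d ! : ℝ) / x' ^ (d + 1) * (x - a) ^ (d + 1) / ((d + 1)! : ℝ)
          ≤ (d ! : ℝ) / a ^ (d + 1) * (b - a) ^ (d + 1) / ((d + 1)! : ℝ) := by
        gcongr <;> first
          | exact sub_nonneg.mpr hax.le
          | exact hx'a.le
          | exact hx.2
          | exact sub_le_sub_right hx.2 a
          | exact pow_nonneg (sub_nonneg.mpr hax.le) _
          | positivity
      refine hstep.trans (le_of_eq ?_)
      have h3 : ((d + 1)! : ℝ) = ((d : ℝ) + 1) * (d ! : ℝ) := by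
        exact_mod_cast Nat.factorial_succ d
      rw [div_pow, h3]
      have hd0 : (d ! : ℝ) ≠ 0 := by positivity
      field_simp

end LogTaylorAux

/-- For `n ≥ 1` there is a `2(n−1)`-piece piecewise polynomial, each piece of degree
at most `d`, approximating `log x` on `[2^{-n+1}, 1]` with uniform error at most
`2^{-d-1}/(d+1)`. The pieces are `[2^{-i-1}, 3·2^{-i-2}]` and `[3·2^{-i-2}, 2^{-i}]`
for `i ∈ {0,…,n−2}`. -/
theorem log_piecewise_approx (n : ℕ) (hn : 1 ≤ n) (d : ℕ) :
    ∃ p q : ℕ → Polynomial ℝ,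
      (∀ i < n - 1, (p i).degree ≤ d ∧ (q i).degree ≤ d) ∧
      ∀ i < n - 1,
        (∀ x ∈ Set.Icc ((2 : ℝ) ^ (-(i : ℝ) - 1)) (3 * (2 : ℝ) ^ (-(i : ℝ) - 2)),
          |Real.log x - (p i).eval x| ≤ 1 / (((d : ℝ) + 1) * 2 ^ (d + 1))) ∧
        (∀ x ∈ Set.Icc (3 * (2 : ℝ) ^ (-(i : ℝ) - 2)) ((2 : ℝ) ^ (-(i : ℝ))),
          |Real.log x - (q i).eval x| ≤ 1 / (((d : ℝ) + 1) * 2 ^ (d + 1))) := by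
  have hd1 : (0 : ℝ) < (d : ℝ) + 1 := by positivity
  have hhalf : ((1 : ℝ) / 2) ^ (d + 1) / ((d : ℝ) + 1) = 1 / (((d : ℝ) + 1) * 2 ^ (d + 1)) := by
    rw [div_pow, one_pow]
    rw [div_div, one_div, one_div, mul_comm]
  have hp : ∀ i : ℕ, ∃ P : Polynomial ℝ, P.degree ≤ d ∧
      ∀ x ∈ Set.Icc ((2 : ℝ) ^ (-(i : ℝ) - 1)) (3 * (2 : ℝ) ^ (-(i : ℝ) - 2)),
        |Real.log x - P.eval x| ≤ 1 / (((d : ℝ) + 1) * 2 ^ (d + 1)) := by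
    intro i
    set t : ℝ := (2 : ℝ) ^ (-(i : ℝ) - 2) with ht
    have ht0 : 0 < t := Real.rpow_pos_of_pos two_pos _
    have h1 : (2 : ℝ) ^ (-(i : ℝ) - 1) = 2 * t := by
      rw [ht, show -(i : ℝ) - 1 = 1 + (-(i : ℝ) - 2) by ring, Real.rpow_add two_pos,
        Real.rpow_one]
    obtain ⟨P, hdeg, hP⟩ := log_taylor_bound d (a := 2 * t) (b := 3 * t)
      (by positivity) (by nlinarith)
    refine ⟨P, hdeg, fun x hx => ?_⟩
    rw [h1] at hx
    have := hP x hx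
    have hr : (3 * t - 2 * t) / (2 * t) = 1 / 2 := by
      field_simp
      ring
    rw [hr, hhalf] at this
    exact this
  have hq : ∀ i : ℕ, ∃ P : Polynomial ℝ, P.degree ≤ d ∧
      ∀ x ∈ Set.Icc (3 * (2 : ℝ) ^ (-(i : ℝ) - 2)) ((2 : ℝ) ^ (-(i : ℝ))),
        |Real.log x - P.eval x| ≤ 1 / (((d : ℝ) + 1) * 2 ^ (d + 1)) := by
    intro i
    set t : ℝ := (2 : ℝ) ^ (-(i : ℝ) - 2) with ht
    have ht0 : 0 < t := Real.rpow_pos_of_pos two_pos _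
    have h1 : (2 : ℝ) ^ (-(i : ℝ)) = 4 * t := by
      rw [ht, show -(i : ℝ) = 2 + (-(i : ℝ) - 2) by ring, Real.rpow_add two_pos]
      norm_num [Real.rpow_two]
    obtain ⟨P, hdeg, hP⟩ := log_taylor_bound d (a := 3 * t) (b := 4 * t)
      (by positivity) (by nlinarith)
    refine ⟨P, hdeg, fun x hx => ?_⟩
    rw [h1] at hx
    have h2 := hP x hx
    have hr : (4 * t - 3 * t) / (3 * t) = 1 / 3 := by
      field_simp
      ring
    rw [hr] at h2
    refine h2.trans ?_
    rw [← hhalf]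
    gcongr <;> norm_num
  choose p hpdeg hpb using hp
  choose q hqdeg hqb using hq
  exact ⟨p, q, fun i _ => ⟨hpdeg i, hqdeg i⟩, fun i _ => ⟨hpb i, hqb i⟩⟩
end

section
/- Let δ_m = (1/𝒩²)·∑_{|k−E| > m} W_m(k−E)^{2} where W_m(x) = (sin(xπ/m)/(xπ/m))^m, E ∈ ℝ, the sum is over integers k with |k − E| > m, and 𝒩² ≥ c·√m for some constant c > 0. Then δ_m ≤ (2/(c√m))·(m/(2m−1))·π^{-2m}, hence δ_m = O(exp(−m)). -/
set_option maxHeartbeats 1000000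

open Real

/-- The sinc-power window `W_m(x) = (sin(xπ/m)/(xπ/m))^m` (with `W_m(0) = 1`). -/
noncomputable def sincPowWindow (m : ℕ) (x : ℝ) : ℝ :=
  if x = 0 then 1 else (Real.sin (x * Real.pi / m) / (x * Real.pi / m)) ^ m

namespace BsplineTail

/-- Bernoulli-type telescoping bound: `n (b-a) / b^(n+1) ≤ 1/a^n - 1/b^n`. -/
lemma tele {n : ℕ} {a b : ℝ} (ha : 0 < a) (hab : a < b) :
    (n : ℝ) * (b - a) / b ^ (n + 1) ≤ 1 / a ^ n - 1 / b ^ n := by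
  have hb : 0 < b := ha.trans hab
  have hba : (0:ℝ) ≤ b - a := by linarith
  have h1 : 1 + (n : ℝ) * ((b - a) / a) ≤ (1 + (b - a) / a) ^ n := by
    refine one_add_mul_le_pow ?_ n
    have := div_nonneg hba ha.le
    linarith
  have h2 : ((1 : ℝ) + (b - a) / a) = b / a := by field_simp; ring
  rw [h2, div_pow] at h1
  have key : (n : ℝ) * (b - a) / b ≤ b ^ n / a ^ n - 1 := by
    have h3 : (n : ℝ) * (b - a) / b ≤ (n : ℝ) * (b - a) / a := by
      apply div_le_div_of_nonneg_left (by positivity) ha hab.le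
    have h4 : (n : ℝ) * (b - a) / a = (n : ℝ) * ((b - a) / a) := by ring
    rw [h4] at h3
    linarith
  have e1 : (n : ℝ) * (b - a) / b ^ (n + 1) = ((n : ℝ) * (b - a) / b) / b ^ n := by
    rw [pow_succ]; ring
  have e2 : 1 / a ^ n - 1 / b ^ n = (b ^ n / a ^ n - 1) / b ^ n := by
    field_simp
  rw [e1, e2]
  gcongr

/-- evenness of the window -/
lemma W_neg (m : ℕ) (x : ℝ) : sincPowWindow m (-x) = sincPowWindow m x := by
  unfold sincPowWindow
  rcases eq_or_ne x 0 with h | h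
  · simp [h]
  · rw [if_neg (neg_ne_zero.2 h), if_neg h]
    have e : -x * π / m = -(x * π / m) := by ring
    rw [e, Real.sin_neg, neg_div_neg_eq]

lemma W_sq (m : ℕ) {x : ℝ} (hx : x ≠ 0) :
    (sincPowWindow m x) ^ 2 = Real.sin (x * π / m) ^ (2 * m) / (x * π / m) ^ (2 * m) := by
  unfold sincPowWindow
  rw [if_neg hx, ← pow_mul, mul_comm m 2, div_pow]

lemma sin_pow_le_one (m : ℕ) (t : ℝ) : Real.sin t ^ (2 * m) ≤ 1 := by
  rw [pow_mul]
  exact pow_le_one₀ (sq_nonneg _) (Real.sin_sq_le_one t)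

lemma sin_pow_nonneg (m : ℕ) (t : ℝ) : 0 ≤ Real.sin t ^ (2 * m) := by
  rw [pow_mul]; positivity

lemma W_sq_eq_shift (m : ℕ) (hm : 1 ≤ m) {x0 : ℝ} (h1 : (m : ℝ) < x0) :
    (sincPowWindow m x0) ^ 2
      = Real.sin ((x0 - m) * π / m) ^ (2 * m) * ((m : ℝ) ^ (2 * m) / (π ^ (2 * m) * x0 ^ (2 * m))) := by
  have hmR : (0:ℝ) < m := by exact_mod_cast hm
  have hx0 : 0 < x0 := lt_trans hmR h1
  rw [W_sq m hx0.ne']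
  have e : x0 * π / m = (x0 - m) * π / m + π := by field_simp; ring
  have enum : Real.sin (x0 * π / m) ^ (2 * m) = Real.sin ((x0 - m) * π / m) ^ (2 * m) := by
    rw [e, Real.sin_add_pi]
    exact Even.neg_pow (even_two_mul m) _
  have hden : (x0 * π / (m:ℝ)) ^ (2 * m) = x0 ^ (2 * m) * π ^ (2 * m) / (m : ℝ) ^ (2 * m) := by
    rw [div_pow, mul_pow]
  rw [enum, hden]
  rw [div_div_eq_mul_div, div_eq_mul_inv, mul_assoc]
  congr 1
  rw [eq_div_iff (by positivity), mul_comm]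
  field_simp
lemma sinpow_le {m : ℕ} (hm : 3 ≤ m) {s : ℝ} (hs0 : 0 < s) (hs1 : s ≤ 1) :
    Real.sin (s * π / m) ^ (2 * m) ≤ s := by
  have hπ := Real.pi_pos
  have hmR : (3:ℝ) ≤ (m:ℝ) := by exact_mod_cast hm
  have hθ0 : 0 ≤ s * π / m := by positivity
  have hθle3 : s * π / m ≤ π / 3 := by
    rw [div_le_div_iff₀ (by linarith) (by norm_num)]
    nlinarith
  have hθπ : s * π / m ≤ π := le_trans hθle3 (by linarith)
  have hsin0 : 0 ≤ Real.sin (s * π / m) := Real.sin_nonneg_of_nonneg_of_le_pi hθ0 hθπ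
  have hsinle : Real.sin (s * π / m) ≤ s * π / m := Real.sin_le hθ0
  by_cases h4 : 4 ≤ m
  · have h4R : (4:ℝ) ≤ (m:ℝ) := by exact_mod_cast h4
    have hπm : π ≤ (m:ℝ) := by nlinarith [pi_lt_d2]
    have h1 : Real.sin (s * π / m) ≤ s := by
      calc Real.sin (s * π / m) ≤ s * π / m := hsinle
        _ ≤ s * (m:ℝ) / m := by gcongr
        _ = s := by field_simp
    calc Real.sin (s * π / m) ^ (2*m) ≤ s ^ (2*m) := pow_le_pow_left₀ hsin0 h1 _
      _ ≤ s := pow_le_of_le_one hs0.le hs1 (by omega)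
  · have hm3 : m = 3 := by omega
    subst hm3
    simp only [Nat.cast_ofNat] at hθ0 hθπ hsin0 hsinle hθle3 ⊢
    by_cases h9 : s ≤ 0.9
    · have hπ6 : π ^ 6 ≤ 961.42 := by
        have h2 : π ^ 2 ≤ 9.8697 := by
          nlinarith [pi_lt_d6, pi_pos, mul_lt_mul_of_pos_left pi_lt_d6 pi_pos,
            mul_lt_mul_of_pos_right pi_lt_d6 (by norm_num : (0:ℝ) < 3.141593)]
        calc π ^ 6 = (π ^ 2) ^ 3 := by ring
          _ ≤ 9.8697 ^ 3 := pow_le_pow_left₀ (sq_nonneg π) h2 3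
          _ ≤ 961.42 := by norm_num
      have h1 : Real.sin (s * π / 3) ^ (2*3) ≤ (s * π / 3) ^ 6 := by
        have h := pow_le_pow_left₀ hsin0 hsinle 6
        norm_num at h ⊢
        convert h using 2 <;> norm_num
      have hs5 : s ^ 5 ≤ 0.9 ^ 5 := pow_le_pow_left₀ hs0.le h9 5
      have e : (s * π / 3) ^ 6 = s * (s ^ 5 * π ^ 6) / 729 := by ring
      have : (s * π / 3) ^ 6 ≤ s := by
        rw [e]
        rw [div_le_iff₀ (by norm_num)]
        have hmul : s ^ 5 * π ^ 6 ≤ 0.9 ^ 5 * 961.42 :=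
          mul_le_mul hs5 hπ6 (pow_nonneg pi_pos.le 6) (by norm_num)
        nlinarith [hs0.le]
      calc Real.sin (s * π / 3) ^ (2*3) ≤ (s * π / 3)^6 := h1
        _ ≤ s := this
    · push_neg at h9
      have hθ2 : (s * π / 3) ^ 2 ≤ 1.0967 := by nlinarith [pi_lt_d6, hs1, hθ0]
      have hcos : 1 - (s * π / 3) ^ 2 / 2 ≤ Real.cos (s * π / 3) := Real.one_sub_sq_div_two_le_cos
      have hcos2 : (0.4516:ℝ) ≤ Real.cos (s * π / 3) := by nlinarith
      have hpyth := Real.sin_sq_add_cos_sq (s * π / 3)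
      have hsin2 : Real.sin (s * π / 3) ^ 2 ≤ 0.797 := by
        nlinarith [sq_nonneg (Real.cos (s * π / 3) - 0.4516)]
      have : Real.sin (s * π / 3) ^ (2*3) = (Real.sin (s * π / 3) ^ 2) ^ 3 := by ring
      rw [this]
      calc (Real.sin (s * π / 3) ^ 2) ^ 3 ≤ 0.797 ^ 3 := pow_le_pow_left₀ (sq_nonneg _) hsin2 3
        _ ≤ s := by nlinarith
/-- the first term of each side is controlled by `∫_m^{x0} (m/(πx))^{2m} dx`, `m ≥ 2`. -/
lemma firstTerm {m n : ℕ} (hm : 2 ≤ m) (hn : n + 1 = 2 * m) {x0 : ℝ}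
    (h1 : (m : ℝ) < x0) (h2 : x0 ≤ (m : ℝ) + 1) :
    (sincPowWindow m x0) ^ 2
      ≤ (m : ℝ) ^ (2 * m) / π ^ (2 * m) * ((1 / (m : ℝ) ^ n - 1 / x0 ^ n) / (n : ℝ)) := by
  have hπ := Real.pi_pos
  have hmR : (2:ℝ) ≤ (m:ℝ) := by exact_mod_cast hm
  have hmR0 : (0:ℝ) < (m:ℝ) := by linarith
  have hx0 : (0:ℝ) < x0 := lt_trans hmR0 h1
  have hs0 : (0:ℝ) < x0 - m := by linarith
  have hs1 : x0 - (m:ℝ) ≤ 1 := by linarith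
  have hn1 : 1 ≤ n := by omega
  have hnR : (1:ℝ) ≤ (n:ℝ) := by exact_mod_cast hn1
  have ht := tele (n := n) hmR0 h1
  rw [hn] at ht
  have hkey : (x0 - m) / x0 ^ (2 * m) ≤ (1 / (m : ℝ) ^ n - 1 / x0 ^ n) / (n : ℝ) := by
    rw [le_div_iff₀ (by linarith)]
    calc (x0 - ↑m) / x0 ^ (2 * m) * n = (n:ℝ) * (x0 - m) / x0 ^ (2*m) := by ring
      _ ≤ _ := ht
  rw [W_sq_eq_shift m (by omega) h1]
  have hKpos : (0:ℝ) < (m : ℝ) ^ (2 * m) / (π ^ (2 * m) * x0 ^ (2 * m)) := by positivity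
  -- reduce to a bound on the sin-power
  by_cases h3 : 3 ≤ m
  · have hσ := sinpow_le h3 hs0 hs1
    calc Real.sin ((x0 - m) * π / m) ^ (2*m) * ((m : ℝ) ^ (2 * m) / (π ^ (2 * m) * x0 ^ (2 * m)))
        ≤ (x0 - m) * ((m : ℝ) ^ (2 * m) / (π ^ (2 * m) * x0 ^ (2 * m))) := by
          exact mul_le_mul_of_nonneg_right hσ hKpos.le
      _ = (m : ℝ) ^ (2 * m) / π ^ (2 * m) * ((x0 - m) / x0 ^ (2*m)) := by ring
      _ ≤ _ := by
          apply mul_le_mul_of_nonneg_left hkey (by positivity)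
  · -- m = 2
    have hm2 : m = 2 := by omega
    have hn3 : n = 3 := by omega
    subst hm2 hn3
    simp only [Nat.cast_ofNat] at *
    set s : ℝ := x0 - 2 with hsdef
    rcases le_or_gt s (1/2) with hhalf | hhalf
    · -- sin^4 ≤ s, then use hkey
      have hθ0 : 0 ≤ s * π / 2 := by positivity
      have hθπ : s * π / 2 ≤ π := by nlinarith
      have hsin0 : 0 ≤ Real.sin (s * π / 2) := Real.sin_nonneg_of_nonneg_of_le_pi hθ0 hθπ
      have hsinle : Real.sin (s * π / 2) ≤ s * π / 2 := Real.sin_le hθ0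
      have hσ : Real.sin (s * π / 2) ^ (2*2) ≤ s := by
        have h4 : Real.sin (s * π / 2) ^ 4 ≤ (s * π / 2) ^ 4 := pow_le_pow_left₀ hsin0 hsinle 4
        have hπ4 : π ^ 4 ≤ 97.411 := by
          have h2 : π ^ 2 ≤ 9.8697 := by
            nlinarith [pi_lt_d6, pi_pos, mul_lt_mul_of_pos_left pi_lt_d6 pi_pos,
              mul_lt_mul_of_pos_right pi_lt_d6 (by norm_num : (0:ℝ) < 3.141593)]
          calc π ^ 4 = (π^2)^2 := by ring
            _ ≤ 9.8697^2 := pow_le_pow_left₀ (sq_nonneg π) h2 2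
            _ ≤ 97.411 := by norm_num
        have hs3 : s^3 ≤ (1/2)^3 := pow_le_pow_left₀ hs0.le hhalf 3
        have e : (s * π / 2)^4 = s * (s^3 * π^4) / 16 := by ring
        have hmul : s^3 * π^4 ≤ (1/2)^3 * 97.411 :=
          mul_le_mul hs3 hπ4 (by positivity) (by norm_num)
        calc Real.sin (s * π / 2) ^ (2*2) = Real.sin (s * π / 2) ^ 4 := by norm_num
          _ ≤ (s * π / 2)^4 := h4
          _ = s * (s^3 * π^4) / 16 := e
          _ ≤ s := by nlinarith [hs0.le]
      calc Real.sin ((x0 - 2) * π / 2) ^ (2*2) * ((2:ℝ) ^ (2*2) / (π ^ (2*2) * x0 ^ (2*2)))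
          ≤ s * ((2:ℝ) ^ (2*2) / (π ^ (2*2) * x0 ^ (2*2))) :=
            mul_le_mul_of_nonneg_right hσ (by positivity)
        _ = (2:ℝ) ^ (2*2) / π ^ (2*2) * ((x0 - 2) / x0 ^ (2*2)) := by rw [hsdef]; ring
        _ ≤ _ := mul_le_mul_of_nonneg_left hkey (by positivity)
    · -- numeric branches: s ∈ (1/2, 1]
      have hB : ∀ B : ℝ, 0 ≤ B → Real.sin ((x0-2) * π / 2) ^ (2*2) ≤ B →
          B / x0^4 ≤ (1/8 - 1/x0^3)/3 →
          Real.sin ((x0 - 2) * π / 2) ^ (2*2) * ((2:ℝ) ^ (2*2) / (π ^ (2*2) * x0 ^ (2*2)))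
            ≤ (2:ℝ) ^ (2*2) / π ^ (2*2) * ((1 / (2:ℝ) ^ 3 - 1 / x0 ^ 3) / (3:ℝ)) := by
        intro B hB0 hσB hnum
        calc Real.sin ((x0-2) * π / 2) ^ (2*2) * ((2:ℝ) ^ (2*2) / (π ^ (2*2) * x0 ^ (2*2)))
            ≤ B * ((2:ℝ) ^ (2*2) / (π ^ (2*2) * x0 ^ (2*2))) :=
              mul_le_mul_of_nonneg_right hσB (by positivity)
          _ = (2:ℝ) ^ (2*2) / π ^ (2*2) * (B / x0 ^ 4) := by ring
          _ ≤ (2:ℝ) ^ (2*2) / π ^ (2*2) * ((1/8 - 1/x0^3)/3) :=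
              mul_le_mul_of_nonneg_left hnum (by positivity)
          _ = _ := by norm_num
      rcases le_or_gt s (3/4) with h34 | h34
      · -- s ∈ (1/2, 3/4]
        apply hB 0.7633 (by norm_num)
        · set u : ℝ := 1 - s with hu
          have hu1 : 1/4 ≤ u := by rw [hu]; linarith
          have hu2 : u ≤ 1/2 := by rw [hu]; linarith
          have e1 : (x0 - 2) * π / 2 = π/2 - u * π / 2 := by rw [hu, hsdef]; ring
          rw [e1, Real.sin_pi_div_two_sub]
          have hπl := pi_gt_d6
          have hπu := pi_lt_d6
          have hv0 : 0 < u * π / 4 := by nlinarith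
          have hv_lo : (0.196:ℝ) ≤ u * π / 4 := by nlinarith
          have hv_hi : u * π / 4 ≤ 0.3927 := by nlinarith
          have hv1 : u * π / 4 ≤ 1 := by linarith
          have hsv : u * π / 4 - (u * π / 4) ^ 3 / 4 < Real.sin (u * π / 4) := by
            have := Real.sin_gt_sub_cube hv0; linarith [pow_pos hv0 3]
          have hv3 : (u*π/4)^3 ≤ 0.0606 := by
            calc (u*π/4)^3 ≤ 0.3927^3 := pow_le_pow_left₀ hv0.le hv_hi 3
              _ ≤ 0.0606 := by norm_num
          have hsq : (0.1808:ℝ) ≤ Real.sin (u * π / 4) := by linarith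
          have hsq2 : (0.1808:ℝ)^2 ≤ Real.sin (u*π/4)^2 := pow_le_pow_left₀ (by norm_num) hsq 2
          have hvd : u * π / 2 = 2 * (u * π / 4) := by ring
          have hdb : Real.cos (u * π/2) = 1 - 2 * Real.sin (u * π / 4)^2 := by
            rw [hvd, Real.cos_two_mul]
            have := Real.sin_sq_add_cos_sq (u * π / 4)
            nlinarith
          have hcb : Real.cos (u * π / 2) ≤ 0.9347 := by rw [hdb]; nlinarith
          have hc0 : 0 ≤ Real.cos (u * π / 2) := by
            apply Real.cos_nonneg_of_mem_Icc
            constructor <;> nlinarith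
          calc Real.cos (u * π / 2) ^ (2*2) = (Real.cos (u * π / 2))^4 := by norm_num
            _ ≤ (0.9347:ℝ)^4 := pow_le_pow_left₀ hc0 hcb 4
            _ ≤ 0.7633 := by norm_num
        · have hx25 : (2.5:ℝ) ≤ x0 := by
            have : x0 - 2 ≤ 1/2 → False := fun h => absurd h (by simpa [hsdef] using hhalf.not_ge)
            linarith [hhalf]
          rw [div_le_div_iff₀ (by positivity) (by norm_num)]
          have e : (1/8 - 1/x0^3) * x0^4 = x0^4/8 - x0 := by field_simp
          rw [e]
          nlinarith [sq_nonneg (x0 - 2.5), sq_nonneg x0]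
      · -- s ∈ (3/4, 1]
        apply hB 1 (by norm_num) (sin_pow_le_one 2 _)
        have hx275 : (2.75:ℝ) ≤ x0 := by simp only [hsdef] at h34; linarith
        rw [div_le_div_iff₀ (by positivity) (by norm_num)]
        have e : (1/8 - 1/x0^3) * x0^4 = x0^4/8 - x0 := by field_simp
        rw [e]
        nlinarith [sq_nonneg (x0 - 2.75), sq_nonneg x0]
/-- key m=1 analytic inequality -/
lemma I1 {x0 : ℝ} (h1 : 1 < x0) (h2 : x0 ≤ 2) :
    Real.sin (x0 * π) ^ 2 * (1 / x0 ^ 2 + 1 / (x0 + 1/2)) ≤ 1 := by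
  have hπl := pi_gt_d6
  have hπu := pi_lt_d6
  have hπ : 0 < π := pi_pos
  have hx0 : (0:ℝ) < x0 := by linarith
  set s : ℝ := x0 - 1 with hsdef
  have hs0 : 0 < s := by rw [hsdef]; linarith
  have hs1 : s ≤ 1 := by rw [hsdef]; linarith
  have hσ : Real.sin (x0 * π) ^ 2 = Real.sin (s * π) ^ 2 := by
    have e : x0 * π = s * π + π := by rw [hsdef]; ring
    rw [e, Real.sin_add_pi]
    ring
  rw [hσ]
  have hb : 1 / x0 ^ 2 + 1 / (x0 + 1/2) = ((x0 + 1/2) + x0^2) / (x0^2 * (x0 + 1/2)) := by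
    field_simp
  rw [hb, ← mul_div_assoc, div_le_one (by positivity)]
  have hsin_sq1 : Real.sin (s * π) ^ 2 ≤ 1 := Real.sin_sq_le_one _
  have hsin_sq0 : 0 ≤ Real.sin (s * π) ^ 2 := sq_nonneg _
  rcases le_or_gt (1/2) s with hbig | hsmall
  · -- s ≥ 1/2 : bracket itself ≤ 17/18
    nlinarith [sq_nonneg (x0 - 3/2)]
  rcases le_or_gt s 0.29 with hA | hA
  · -- s ≤ 0.29 : sin² ≤ π²s²
    have hsπ0 : 0 ≤ s * π := by positivity
    have hsππ : s * π ≤ π := by nlinarith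
    have h0sin : 0 ≤ Real.sin (s * π) := Real.sin_nonneg_of_nonneg_of_le_pi hsπ0 hsππ
    have hsinle : Real.sin (s * π) ≤ s * π := Real.sin_le hsπ0
    have hsq : Real.sin (s * π) ^ 2 ≤ (s*π)^2 := pow_le_pow_left₀ h0sin hsinle 2
    have hπ2 : π^2 ≤ 9.8697 := by nlinarith
    have hsp2 : (s*π)^2 ≤ 9.8697 * s^2 := by
      have : (s*π)^2 = s^2 * π^2 := by ring
      nlinarith [sq_nonneg s]
    -- polynomial inequality in s on [0, 0.29]
    nlinarith [sq_nonneg s, mul_nonneg (mul_nonneg hs0.le hs0.le) hs0.le,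
      mul_nonneg (sub_nonneg.2 hA) (sq_nonneg s),
      mul_nonneg (mul_nonneg (sub_nonneg.2 hA) hs0.le) hs0.le,
      mul_nonneg (sub_nonneg.2 hA) (mul_nonneg (sq_nonneg s) hs0.le)]
  · -- 0.29 < s < 1/2
    set u : ℝ := 1 - 2*s with hu
    have hu0 : 0 < u := by rw [hu]; linarith
    have hu42 : u < 0.42 := by rw [hu]; linarith
    have e1 : s * π = π/2 - u * π/2 := by rw [hu]; ring
    rw [e1, Real.sin_pi_div_two_sub]
    have hw0 : 0 < u * π / 2 := by positivity
    have hw1 : u * π / 2 ≤ 1 := by nlinarith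
    have hsv : u * π / 2 - (u * π / 2) ^ 3 / 4 < Real.sin (u * π / 2) := by
      have := Real.sin_gt_sub_cube hw0; linarith [pow_pos hw0 3]
    have hπ2 : π^2 ≤ 9.8697 := by nlinarith
    have hπ3 : π^3 ≤ 31.007 := by nlinarith
    have hA' : 1.39 * u ≤ u * π/2 - (u * π/2)^3/4 := by
      have e2 : u * π/2 - (u * π/2)^3/4 = u * (π/2) - u^3 * (π^3/32) := by ring
      rw [e2]
      have hu2 : u^2 ≤ 0.1764 := by nlinarith
      have h3 : u^3 * (π^3/32) ≤ u * (0.1764 * (31.007/32)) := by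
        have : u^3 = u * u^2 := by ring
        rw [this]
        have h1 : u * u^2 * (π^3/32) = u * (u^2 * (π^3/32)) := by ring
        rw [h1]
        apply mul_le_mul_of_nonneg_left _ hu0.le
        nlinarith [sq_nonneg u]
      nlinarith
    have hsinq : 1.39 * u ≤ Real.sin (u * π / 2) := by linarith
    have hsq2 : (1.39*u)^2 ≤ Real.sin (u * π/2)^2 := by
      apply pow_le_pow_left₀ (by positivity) hsinq
    have hcos2 : Real.cos (u * π/2)^2 ≤ 1 - 1.9321 * u^2 := by
      have := Real.sin_sq_add_cos_sq (u * π/2)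
      nlinarith
    -- final polynomial inequality: (1 - 1.9321 u²)(x0 + 1/2 + x0²) ≤ x0²(x0+1/2), x0 = (3-u)/2
    have hx0u : x0 = (3 - u)/2 := by rw [hu, hsdef]; ring
    rw [hx0u]
    have hX : (0:ℝ) ≤ (3-u)/2 + 1/2 + ((3-u)/2)^2 := by nlinarith
    have step1 : Real.cos (u*π/2)^2 * ((3-u)/2 + 1/2 + ((3-u)/2)^2)
        ≤ (1 - 1.9321*u^2) * ((3-u)/2 + 1/2 + ((3-u)/2)^2) :=
      mul_le_mul_of_nonneg_right hcos2 hX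
    refine le_trans step1 ?_
    nlinarith [sq_nonneg (u - 0.141), mul_nonneg (sub_nonneg.2 hu42.le) (mul_nonneg hu0.le hu0.le)]
lemma W_sq_le (m : ℕ) (hm : 1 ≤ m) {x : ℝ} (hx : (m:ℝ) < x) :
    (sincPowWindow m x) ^ 2 ≤ (m:ℝ)^(2*m) / (π^(2*m) * x^(2*m)) := by
  have hπ := pi_pos
  have hm0 : (0:ℝ) < m := by exact_mod_cast hm
  have hx0 : 0 < x := hm0.trans hx
  rw [W_sq_eq_shift m hm hx]
  calc Real.sin ((x - m) * π / m) ^ (2*m) * ((m:ℝ)^(2*m)/(π^(2*m) * x^(2*m)))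
      ≤ 1 * ((m:ℝ)^(2*m)/(π^(2*m) * x^(2*m))) :=
        mul_le_mul_of_nonneg_right (sin_pow_le_one m _) (by positivity)
    _ = _ := one_mul _

lemma side_partial (m : ℕ) (hm : 1 ≤ m) {x0 : ℝ} (h1 : (m:ℝ) < x0) (h2 : x0 ≤ (m:ℝ)+1)
    (N : ℕ) :
    ∑ j ∈ Finset.range N, (sincPowWindow m (x0 + j))^2
      ≤ ((m:ℝ)/(2*(m:ℝ)-1))/π^(2*m) := by
  have hπ := pi_pos
  have hm0 : (0:ℝ) < m := by exact_mod_cast hm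
  have hm1R : (1:ℝ) ≤ (m:ℝ) := by exact_mod_cast hm
  have hx0 : 0 < x0 := hm0.trans h1
  have h2m1 : (0:ℝ) < 2*(m:ℝ)-1 := by linarith
  have hC0 : (0:ℝ) ≤ ((m:ℝ)/(2*(m:ℝ)-1))/π^(2*m) :=
    div_nonneg (div_nonneg hm0.le h2m1.le) (by positivity)
  rcases eq_or_lt_of_le hm with hm1 | hm2
  · -- m = 1
    have hm1' : m = 1 := hm1.symm
    subst hm1'
    simp only [Nat.cast_one] at h1 h2 hm0 hm1R ⊢
    set σ : ℝ := Real.sin (x0 * π)^2 with hσdef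
    have hσ0 : 0 ≤ σ := sq_nonneg _
    have hterm : ∀ j : ℕ, (sincPowWindow 1 (x0 + j))^2 = σ / π^2 * (1/(x0+j)^2) := by
      intro j
      have hxj : (0:ℝ) < x0 + j := by positivity
      rw [W_sq 1 hxj.ne']
      have key : ∀ i:ℕ, Real.sin (x0*π + i*π) ^ 2 = σ := by
        intro i
        induction i with
        | zero => simp [hσdef]
        | succ k ih =>
          have e : x0*π + (k+1:ℕ)*π = (x0*π + k*π) + π := by push_cast; ring
          rw [e, Real.sin_add_pi, neg_sq, ih]
      have e1 : (x0 + j) * π / ((1:ℕ):ℝ) = x0*π + j*π := by push_cast; ring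
      rw [e1]
      rw [show 2*1 = 2 from rfl, key j]
      rw [show (x0*π + (j:ℝ)*π)^2 = (x0+j)^2*π^2 by ring]
      have hπ2 : (0:ℝ) < π^2 := by positivity
      have hx2 : (0:ℝ) < (x0+j)^2 := by positivity
      field_simp
    set bb : ℕ → ℝ := fun j => 1/(x0+j+1/2) with hbb
    rcases N with _ | N'
    · simpa using hC0
    · rw [Finset.sum_range_succ']
      have hstep : ∀ j : ℕ, (sincPowWindow 1 (x0 + ((j:ℕ)+1:ℕ)))^2
          ≤ σ/π^2 * (bb j - bb (j+1)) := by
        intro j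
        rw [hterm (j+1)]
        have hj0 : (0:ℝ) ≤ (j:ℝ) := Nat.cast_nonneg j
        have hkey : 1/((x0+((j:ℕ)+1:ℕ))^2) ≤ bb j - bb (j+1) := by
          simp only [hbb]
          push_cast
          have ha : (0:ℝ) < x0 + j + 1/2 := by linarith
          have hb : (0:ℝ) < x0 + (j+1) + 1/2 := by linarith
          rw [div_sub_div _ _ ha.ne' hb.ne']
          rw [div_le_div_iff₀ (by positivity) (by positivity)]
          nlinarith
        have := mul_le_mul_of_nonneg_left hkey (div_nonneg hσ0 (by positivity : (0:ℝ) ≤ π^2))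
        push_cast at this ⊢
        linarith
      have htel : ∑ j ∈ Finset.range N', (σ/π^2 * (bb j - bb (j+1)))
          = σ/π^2 * (bb 0 - bb N') := by
        rw [← Finset.mul_sum, Finset.sum_range_sub' bb N']
      have hbbN : 0 ≤ bb N' := by simp only [hbb]; positivity
      have hsum1 : ∑ j ∈ Finset.range N', (sincPowWindow 1 (x0 + ((j:ℕ)+1:ℕ)))^2
          ≤ σ/π^2 * (bb 0 - bb N') :=
        le_trans (Finset.sum_le_sum (fun j _ => hstep j)) (le_of_eq htel)
      have hterm0 : (sincPowWindow 1 (x0 + ((0:ℕ):ℝ)))^2 = σ/π^2 * (1/x0^2) := by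
        have h := hterm 0
        push_cast at h ⊢
        simpa using h
      have hI1 := I1 h1 (by linarith : x0 ≤ 2)
      have hbb0 : bb 0 = 1/(x0+1/2) := by simp [hbb]
      have hbr : σ/π^2 * (1/x0^2) + σ/π^2 * (1/(x0+1/2)) ≤ 1/π^2 := by
        have e : σ/π^2 * (1/x0^2) + σ/π^2 * (1/(x0+1/2)) = σ * (1/x0^2 + 1/(x0+1/2)) / π^2 := by
          ring
        rw [e]
        gcongr
      have h5 : σ/π^2 * (bb 0 - bb N') ≤ σ/π^2 * (bb 0) := by
        apply mul_le_mul_of_nonneg_left _ (by positivity : (0:ℝ) ≤ σ/π^2)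
        linarith [hbbN]
      calc (∑ j ∈ Finset.range N', (sincPowWindow 1 (x0 + ((j:ℕ)+1:ℕ)))^2)
            + (sincPowWindow 1 (x0 + ((0:ℕ):ℝ)))^2
          ≤ σ/π^2 * (bb 0) + σ/π^2 * (1/x0^2) :=
            add_le_add (hsum1.trans h5) (le_of_eq hterm0)
        _ ≤ 1/π^2 := by rw [hbb0]; linarith [hbr]
        _ = (↑1/(2*(↑1:ℝ)-1))/π^(2*1) := by norm_num
  · -- 2 ≤ m
    have hm2' : 2 ≤ m := hm2
    set n : ℕ := 2*m - 1 with hndef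
    have hn : n + 1 = 2*m := by omega
    have hnR : ((n:ℕ):ℝ) = 2*(m:ℝ) - 1 := by
      have h := congrArg (fun k : ℕ => (k:ℝ)) hn
      push_cast at h
      linarith
    have hnpos : (0:ℝ) < (n:ℝ) := by rw [hnR]; linarith
    set K : ℝ := (m:ℝ)^(2*m)/π^(2*m) with hK
    have hKpos : 0 < K := by positivity
    set a : ℕ → ℝ := fun j => 1/(x0+j)^n with ha
    have hstep : ∀ j : ℕ, (sincPowWindow m (x0 + ((j:ℕ)+1:ℕ)))^2
        ≤ K * ((a j - a (j+1))/(n:ℝ)) := by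
      intro j
      have hj0 : (0:ℝ) ≤ (j:ℝ) := Nat.cast_nonneg j
      have hxj : (m:ℝ) < x0 + ((j:ℕ)+1:ℕ) := by push_cast; linarith
      refine le_trans (W_sq_le m hm hxj) ?_
      have hab : x0 + (j:ℝ) < x0 + ((j:ℕ)+1:ℕ) := by push_cast; linarith
      have htl := tele (n := n) (a := x0 + (j:ℝ)) (b := (x0 + ((j:ℕ)+1:ℕ) : ℝ))
        (by positivity) hab
      rw [hn] at htl
      rw [show ((x0 + ((j:ℕ)+1:ℕ) : ℝ) - (x0 + (j:ℝ))) = 1 by push_cast; ring, mul_one] at htl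
      have hmono : 1/((x0 + ((j:ℕ)+1:ℕ):ℝ))^(2*m) ≤ (a j - a (j+1))/(n:ℝ) := by
        rw [le_div_iff₀ hnpos]
        simp only [ha]
        calc 1/((x0 + ((j:ℕ)+1:ℕ):ℝ))^(2*m) * (n:ℝ)
            = (n:ℝ)/((x0 + ((j:ℕ)+1:ℕ):ℝ))^(2*m) := by ring
          _ ≤ 1/(x0+(j:ℝ))^n - 1/((x0 + ((j:ℕ)+1:ℕ)):ℝ)^n := htl
          _ = 1/(x0+(j:ℝ))^n - 1/(x0+((j+1:ℕ):ℝ))^n := by norm_num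
      calc (m:ℝ)^(2*m)/(π^(2*m) * ((x0 + ((j:ℕ)+1:ℕ):ℝ))^(2*m))
          = K * (1/((x0 + ((j:ℕ)+1:ℕ):ℝ))^(2*m)) := by rw [hK]; ring
        _ ≤ K * ((a j - a (j+1))/(n:ℝ)) := mul_le_mul_of_nonneg_left hmono hKpos.le
    rcases N with _ | N'
    · simpa using hC0
    · rw [Finset.sum_range_succ']
      have htel : ∑ j ∈ Finset.range N', (K * ((a j - a (j+1))/(n:ℝ)))
          = K/(n:ℝ) * (a 0 - a N') := by
        have e : ∀ j:ℕ, K * ((a j - a (j+1))/(n:ℝ)) = K/(n:ℝ) * (a j - a (j+1)) := by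
          intro j; ring
        simp_rw [e]
        rw [← Finset.mul_sum, Finset.sum_range_sub' a N']
      have hsum1 : ∑ j ∈ Finset.range N', (sincPowWindow m (x0 + ((j:ℕ)+1:ℕ)))^2
          ≤ K/(n:ℝ) * (a 0 - a N') :=
        le_trans (Finset.sum_le_sum (fun j _ => hstep j)) (le_of_eq htel)
      have ha0 : a 0 = 1/x0^n := by simp [ha]
      have haN : 0 ≤ a N' := by simp only [ha]; positivity
      have hfirst0 : (sincPowWindow m (x0 + ((0:ℕ):ℝ)))^2
          ≤ K * ((1/(m:ℝ)^n - 1/x0^n)/(n:ℝ)) := by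
        have h := firstTerm hm2' hn h1 h2
        rw [hK]
        convert h using 3
        norm_num
      have hCeq : K * (1/(m:ℝ)^n) / (n:ℝ) = ((m:ℝ)/(2*(m:ℝ)-1))/π^(2*m) := by
        have hpowm : (m:ℝ)^(2*m) = (m:ℝ)^n * m := by rw [← hn, pow_succ]
        rw [hK, hpowm, hnR]
        have hmn : ((m:ℝ))^n ≠ 0 := by positivity
        field_simp
      calc (∑ j ∈ Finset.range N', (sincPowWindow m (x0 + ((j:ℕ)+1:ℕ)))^2)
            + (sincPowWindow m (x0 + ((0:ℕ):ℝ)))^2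
          ≤ K/(n:ℝ) * (a 0 - a N') + K * ((1/(m:ℝ)^n - 1/x0^n)/(n:ℝ)) :=
            add_le_add hsum1 hfirst0
        _ = K * (1/(m:ℝ)^n)/(n:ℝ) - K/(n:ℝ) * (a N') := by rw [ha0]; ring
        _ ≤ K * (1/(m:ℝ)^n)/(n:ℝ) := by nlinarith [mul_nonneg (div_nonneg hKpos.le hnpos.le) haN]
        _ = ((m:ℝ)/(2*(m:ℝ)-1))/π^(2*m) := hCeq
end BsplineTail

/-- Tail probability bound for B-spline boosted QPE: if `𝒩² ≥ c·√m` then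
`δ_m = (1/𝒩²)·∑_{|k−E|>m} W_m(k−E)² ≤ (2/(c√m))·(m/(2m−1))·π^{-2m}`. -/
theorem bspline_qpe_tail_bound (m : ℕ) (hm : 1 ≤ m) (E : ℝ) (c Nsq : ℝ)
    (hc : 0 < c) (hN : c * Real.sqrt m ≤ Nsq) :
    (1 / Nsq) *
      (∑' k : ℤ, if (m : ℝ) < |(k : ℝ) - E| then (sincPowWindow m ((k : ℝ) - E)) ^ 2 else 0) ≤
      2 / (c * Real.sqrt m) * ((m : ℝ) / (2 * m - 1)) / Real.pi ^ (2 * m) := by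
  have hπ := pi_pos
  have hm0 : (0:ℝ) < m := by exact_mod_cast hm
  have hm1R : (1:ℝ) ≤ (m:ℝ) := by exact_mod_cast hm
  have h2m1 : (0:ℝ) < 2*(m:ℝ)-1 := by linarith
  set C : ℝ := ((m:ℝ)/(2*(m:ℝ)-1))/π^(2*m) with hC
  set k1 : ℤ := ⌊E + m⌋ + 1 with hk1
  set k2 : ℤ := ⌈E - m⌉ - 1 with hk2
  set x1 : ℝ := (k1:ℝ) - E with hx1
  set x2 : ℝ := E - (k2:ℝ) with hx2
  have hx1a : (m:ℝ) < x1 := by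
    have := Int.lt_floor_add_one (E + m)
    rw [hx1, hk1]; push_cast; linarith
  have hx1b : x1 ≤ (m:ℝ)+1 := by
    have := Int.floor_le (E + m)
    rw [hx1, hk1]; push_cast; linarith
  have hx2a : (m:ℝ) < x2 := by
    have := Int.ceil_lt_add_one (E - m)
    rw [hx2, hk2]; push_cast; linarith
  have hx2b : x2 ≤ (m:ℝ)+1 := by
    have := Int.le_ceil (E - m)
    rw [hx2, hk2]; push_cast; linarith
  set fR : ℤ → ℝ := fun k => if E + m < (k:ℝ) then (sincPowWindow m ((k:ℝ)-E))^2 else 0 with hfR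
  set fL : ℤ → ℝ := fun k => if (k:ℝ) < E - m then (sincPowWindow m ((k:ℝ)-E))^2 else 0 with hfL
  have hsplit : ∀ k : ℤ,
      (if (m:ℝ) < |(k:ℝ) - E| then (sincPowWindow m ((k:ℝ)-E))^2 else 0) = fR k + fL k := by
    intro k
    by_cases hR : E + (m:ℝ) < k
    · have habs : (m:ℝ) < |(k:ℝ) - E| := by
        rw [abs_of_pos (by linarith)]; linarith
      have hnL : ¬((k:ℝ) < E - m) := by push_neg; linarith
      simp only [hfR, hfL, if_pos habs, if_pos hR, if_neg hnL, add_zero]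
    · by_cases hL : (k:ℝ) < E - (m:ℝ)
      · have habs : (m:ℝ) < |(k:ℝ) - E| := by
          rw [abs_of_neg (by linarith)]; linarith
        simp only [hfR, hfL, if_pos habs, if_neg hR, if_pos hL, zero_add]
      · push_neg at hR hL
        have habs : ¬((m:ℝ) < |(k:ℝ) - E|) := by
          push_neg
          rw [abs_le]
          constructor <;> linarith
        simp only [hfR, hfL, if_neg habs, if_neg (not_lt.mpr hR), if_neg (not_lt.mpr hL), add_zero]
  set gR : ℕ → ℝ := fun j => (sincPowWindow m (x1 + j))^2 with hgR
  set gL : ℕ → ℝ := fun j => (sincPowWindow m (x2 + j))^2 with hgL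
  have hgR0 : ∀ j, 0 ≤ gR j := fun j => sq_nonneg _
  have hgL0 : ∀ j, 0 ≤ gL j := fun j => sq_nonneg _
  have hgRC : ∀ N, ∑ j ∈ Finset.range N, gR j ≤ C := BsplineTail.side_partial m hm hx1a hx1b
  have hgLC : ∀ N, ∑ j ∈ Finset.range N, gL j ≤ C := BsplineTail.side_partial m hm hx2a hx2b
  have hSgR : Summable gR := summable_of_sum_range_le hgR0 hgRC
  have hSgL : Summable gL := summable_of_sum_range_le hgL0 hgLC
  have htgR : ∑' j, gR j ≤ C := Real.tsum_le_of_sum_range_le hgR0 hgRC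
  have htgL : ∑' j, gL j ≤ C := Real.tsum_le_of_sum_range_le hgL0 hgLC
  -- right side injection
  set iR : ℕ → ℤ := fun j => k1 + j with hiR
  have hiRinj : Function.Injective iR := by
    intro a b h
    simp only [hiR, add_right_inj, Nat.cast_inj] at h
    exact h
  have hcompR : ∀ j : ℕ, fR (iR j) = gR j := by
    intro j
    have hj0 : (0:ℝ) ≤ (j:ℝ) := Nat.cast_nonneg j
    have hcast : ((k1 + (j:ℤ) : ℤ):ℝ) - E = x1 + j := by rw [hx1]; push_cast; ring
    have hcond : E + m < ((k1 + (j:ℤ) : ℤ):ℝ) := by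
      push_cast
      have : (m:ℝ) < (k1:ℝ) - E := hx1a
      linarith
    simp only [hfR, hgR, hiR, if_pos hcond, hcast]
  have hsuppR : ∀ k ∉ Set.range iR, fR k = 0 := by
    intro k hk
    simp only [hfR]
    rw [if_neg]
    intro hcond
    apply hk
    have hflt : ⌊E + (m:ℝ)⌋ < k := Int.floor_lt.mpr hcond
    have hk1le : k1 ≤ k := by omega
    exact ⟨(k - k1).toNat, by simp only [hiR]; omega⟩
  have hSfR : Summable fR := by
    refine (hiRinj.summable_iff hsuppR).mp ?_
    have : fR ∘ iR = gR := funext hcompR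
    rw [this]; exact hSgR
  have hsuppR' : Function.support fR ⊆ Set.range iR := by
    rw [Function.support_subset_iff']
    exact hsuppR
  have htfR : ∑' k, fR k ≤ C := by
    rw [← hiRinj.tsum_eq hsuppR']
    calc ∑' j, fR (iR j) = ∑' j, gR j := tsum_congr hcompR
      _ ≤ C := htgR
  -- left side injection
  set iL : ℕ → ℤ := fun j => k2 - j with hiL
  have hiLinj : Function.Injective iL := by
    intro a b h
    simp only [hiL, sub_right_inj, Nat.cast_inj] at h
    exact h
  have hcompL : ∀ j : ℕ, fL (iL j) = gL j := by
    intro j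
    have hj0 : (0:ℝ) ≤ (j:ℝ) := Nat.cast_nonneg j
    have hcast : ((k2 - (j:ℤ) : ℤ):ℝ) - E = -(x2 + j) := by rw [hx2]; push_cast; ring
    have hcond : ((k2 - (j:ℤ) : ℤ):ℝ) < E - m := by
      push_cast
      have : (m:ℝ) < E - (k2:ℝ) := hx2a
      linarith
    simp only [hfL, hgL, hiL, if_pos hcond, hcast, BsplineTail.W_neg]
  have hsuppL : ∀ k ∉ Set.range iL, fL k = 0 := by
    intro k hk
    simp only [hfL]
    rw [if_neg]
    intro hcond
    apply hk
    have hclt : k < ⌈E - (m:ℝ)⌉ := Int.lt_ceil.mpr hcond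
    have hk2le : k ≤ k2 := by omega
    exact ⟨(k2 - k).toNat, by simp only [hiL]; omega⟩
  have hSfL : Summable fL := by
    refine (hiLinj.summable_iff hsuppL).mp ?_
    have : fL ∘ iL = gL := funext hcompL
    rw [this]; exact hSgL
  have hsuppL' : Function.support fL ⊆ Set.range iL := by
    rw [Function.support_subset_iff']
    exact hsuppL
  have htfL : ∑' k, fL k ≤ C := by
    rw [← hiLinj.tsum_eq hsuppL']
    calc ∑' j, fL (iL j) = ∑' j, gL j := tsum_congr hcompL
      _ ≤ C := htgL
  -- combine
  have hTeq : (∑' k : ℤ, if (m : ℝ) < |(k : ℝ) - E| then (sincPowWindow m ((k : ℝ) - E)) ^ 2 else 0)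
      = (∑' k, fR k) + (∑' k, fL k) := by
    rw [tsum_congr hsplit]
    exact Summable.tsum_add hSfR hSfL
  have hT0 : 0 ≤ (∑' k : ℤ, if (m : ℝ) < |(k : ℝ) - E| then (sincPowWindow m ((k : ℝ) - E)) ^ 2 else 0) := by
    apply tsum_nonneg
    intro k
    split <;> positivity
  have hTle : (∑' k : ℤ, if (m : ℝ) < |(k : ℝ) - E| then (sincPowWindow m ((k : ℝ) - E)) ^ 2 else 0)
      ≤ C + C := by
    rw [hTeq]; exact add_le_add htfR htfL
  have hsqm : 0 < Real.sqrt m := Real.sqrt_pos.mpr hm0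
  have hcs : 0 < c * Real.sqrt m := mul_pos hc hsqm
  have hNsq : 0 < Nsq := lt_of_lt_of_le hcs hN
  have h1N : 1/Nsq ≤ 1/(c * Real.sqrt m) := one_div_le_one_div_of_le hcs hN
  calc (1 / Nsq) * (∑' k : ℤ, if (m : ℝ) < |(k : ℝ) - E| then (sincPowWindow m ((k : ℝ) - E)) ^ 2 else 0)
      ≤ (1/(c * Real.sqrt m)) * (∑' k : ℤ, if (m : ℝ) < |(k : ℝ) - E| then (sincPowWindow m ((k : ℝ) - E)) ^ 2 else 0) :=
        mul_le_mul_of_nonneg_right h1N hT0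
    _ ≤ (1/(c * Real.sqrt m)) * (C + C) := mul_le_mul_of_nonneg_left hTle (by positivity)
    _ = 2 / (c * Real.sqrt m) * ((m : ℝ) / (2 * m - 1)) / Real.pi ^ (2 * m) := by
        rw [hC]; ring
end

section
/- For all real t with |t| ≤ π/2 and t ≠ 0, log(sin t / t) ≤ −t²/6, and consequently for m ≥ 1 and |x| ≤ m/2, (sin(xπ/m)/(xπ/m))^m ≤ exp(−x²π²/(6m)). -/
open Real

lemma mono_aux {f f' : ℝ → ℝ} (hd : ∀ y, HasDerivAt f (f' y) y)
    (h0 : ∀ y, 0 ≤ y → 0 ≤ f' y) : ∀ x, 0 ≤ x → f 0 ≤ f x := by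
  intro x hx
  have hmono : MonotoneOn f (Set.Ici 0) := by
    apply monotoneOn_of_deriv_nonneg (convex_Ici 0)
    · exact fun y _ => (hd y).continuousAt.continuousWithinAt
    · intro y hy
      exact (hd y).differentiableAt.differentiableWithinAt
    · intro y hy
      rw [(hd y).deriv]
      exact h0 y (le_of_lt (by simpa using hy))
  exact hmono (by simp) (by simpa using hx) hx

lemma sin_ge_cubic : ∀ x : ℝ, 0 ≤ x → x - x^3/6 ≤ Real.sin x := by
  have hd : ∀ y : ℝ, HasDerivAt (fun y => Real.sin y - (y - y^3/6))
      (Real.cos y - (1 - y^2/2)) y := by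
    intro y
    have h2 : HasDerivAt (fun y : ℝ => y - y^3/6) (1 - y^2/2) y := by
      have h3 := (hasDerivAt_pow 3 y).div_const 6
      have := (hasDerivAt_id y).sub h3
      refine this.congr_deriv ?_
      push_cast; ring
    exact (Real.hasDerivAt_sin y).sub h2
  have := mono_aux hd (fun y hy => by
    have := Real.one_sub_sq_div_two_le_cos (x := y); linarith)
  intro x hx
  have h := this x hx
  simp at h
  linarith

lemma cos_le_quartic : ∀ x : ℝ, 0 ≤ x → Real.cos x ≤ 1 - x^2/2 + x^4/24 := by
  have hd : ∀ y : ℝ, HasDerivAt (fun y => 1 - y^2/2 + y^4/24 - Real.cos y)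
      (-(y - y^3/6) + Real.sin y) y := by
    intro y
    have h2 : HasDerivAt (fun y : ℝ => 1 - y^2/2 + y^4/24) (-(y - y^3/6)) y := by
      have ha := ((hasDerivAt_pow 2 y).div_const 2)
      have hb := ((hasDerivAt_pow 4 y).div_const 24)
      have := ((hasDerivAt_const y (1:ℝ)).sub ha).add hb
      refine this.congr_deriv ?_
      push_cast; ring
    have := h2.sub (Real.hasDerivAt_cos y)
    refine this.congr_deriv ?_
    ring
  have := mono_aux hd (fun y hy => by
    have := sin_ge_cubic y hy; linarith)
  intro x hx
  have h := this x hx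
  simp at h
  linarith

lemma sin_le_quintic : ∀ x : ℝ, 0 ≤ x → Real.sin x ≤ x - x^3/6 + x^5/120 := by
  have hd : ∀ y : ℝ, HasDerivAt (fun y => y - y^3/6 + y^5/120 - Real.sin y)
      ((1 - y^2/2 + y^4/24) - Real.cos y) y := by
    intro y
    have h2 : HasDerivAt (fun y : ℝ => y - y^3/6 + y^5/120) (1 - y^2/2 + y^4/24) y := by
      have ha := ((hasDerivAt_pow 3 y).div_const 6)
      have hb := ((hasDerivAt_pow 5 y).div_const 120)
      have := ((hasDerivAt_id y).sub ha).add hb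
      refine this.congr_deriv ?_
      push_cast; ring
    exact h2.sub (Real.hasDerivAt_sin y)
  have := mono_aux hd (fun y hy => by
    have := cos_le_quartic y hy; linarith)
  intro x hx
  have h := this x hx
  simp at h
  linarith

lemma exp_neg_le_quad : ∀ u : ℝ, 0 ≤ u → Real.exp (-u) ≤ 1 - u + u^2/2 := by
  have hd : ∀ y : ℝ, HasDerivAt (fun y => (1 - y + y^2/2) - Real.exp (-y))
      (Real.exp (-y) - (1 - y)) y := by
    intro y
    have he : HasDerivAt (fun y : ℝ => Real.exp (-y)) (-Real.exp (-y)) y := by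
      have := (Real.hasDerivAt_exp (-y)).comp y (hasDerivAt_neg y)
      refine this.congr_deriv ?_; ring
    have h2 : HasDerivAt (fun y : ℝ => 1 - y + y^2/2) (-(1 - y)) y := by
      have ha := ((hasDerivAt_pow 2 y).div_const 2)
      have := ((hasDerivAt_const y (1:ℝ)).sub (hasDerivAt_id y)).add ha
      refine this.congr_deriv ?_
      push_cast; ring
    have := h2.sub he
    refine this.congr_deriv ?_; ring
  have := mono_aux hd (fun y hy => by
    have := Real.add_one_le_exp (-y); linarith)
  intro u hu
  have h := this u hu
  simp at h
  linarith

lemma exp_neg_ge_cubic : ∀ u : ℝ, 0 ≤ u →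
    1 - u + u^2/2 - u^3/6 ≤ Real.exp (-u) := by
  have hd : ∀ y : ℝ, HasDerivAt (fun y => Real.exp (-y) - (1 - y + y^2/2 - y^3/6))
      ((1 - y + y^2/2) - Real.exp (-y)) y := by
    intro y
    have he : HasDerivAt (fun y : ℝ => Real.exp (-y)) (-Real.exp (-y)) y := by
      have := (Real.hasDerivAt_exp (-y)).comp y (hasDerivAt_neg y)
      refine this.congr_deriv ?_; ring
    have h2 : HasDerivAt (fun y : ℝ => 1 - y + y^2/2 - y^3/6) (-(1 - y + y^2/2)) y := by
      have ha := ((hasDerivAt_pow 2 y).div_const 2)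
      have hb := ((hasDerivAt_pow 3 y).div_const 6)
      have := (((hasDerivAt_const y (1:ℝ)).sub (hasDerivAt_id y)).add ha).sub hb
      refine this.congr_deriv ?_
      push_cast; ring
    have := he.sub h2
    refine this.congr_deriv ?_; ring
  have := mono_aux hd (fun y hy => by
    have := exp_neg_le_quad y hy; linarith)
  intro u hu
  have h := this u hu
  simp at h
  linarith


lemma sinc_pos {t : ℝ} (h0 : 0 < t) (h2 : t ≤ Real.pi/2) : 0 < Real.sin t / t :=
  div_pos (Real.sin_pos_of_pos_of_lt_pi h0 (lt_of_le_of_lt h2 (by linarith [Real.pi_pos]))) h0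

lemma key_pos {t : ℝ} (h0 : 0 < t) (h2 : t ≤ Real.pi/2) :
    Real.sin t / t ≤ Real.exp (-t^2/6) := by
  have ht2 : t ≤ 2 := le_trans h2 (by linarith [Real.pi_le_four])
  have hs := sin_le_quintic t h0.le
  have he := exp_neg_ge_cubic (t^2/6) (by positivity)
  have h1 : Real.sin t / t ≤ (t - t^3/6 + t^5/120) / t :=
    div_le_div_of_nonneg_right hs h0.le |>.trans_eq rfl
  have heq : (t - t^3/6 + t^5/120) / t = 1 - t^2/6 + t^4/120 := by
    field_simp
  have h3 : 1 - t^2/6 + t^4/120 ≤ 1 - t^2/6 + (t^2/6)^2/2 - (t^2/6)^3/6 := by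
    have h4 : t^2 ≤ 4 := by nlinarith
    nlinarith [mul_le_mul_of_nonneg_left h4 (pow_nonneg h0.le 4)]
  have : -(t^2/6) = -t^2/6 := by ring
  calc Real.sin t / t ≤ 1 - t^2/6 + t^4/120 := heq ▸ h1
    _ ≤ 1 - (t^2/6) + (t^2/6)^2/2 - (t^2/6)^3/6 := h3
    _ ≤ Real.exp (-(t^2/6)) := he
    _ = Real.exp (-t^2/6) := by rw [this]

lemma key_all {t : ℝ} (h2 : |t| ≤ Real.pi/2) (hne : t ≠ 0) :
    Real.sin t / t ≤ Real.exp (-t^2/6) ∧ 0 < Real.sin t / t := by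
  rcases lt_or_gt_of_ne hne with h | h
  · have ha : |t| = -t := abs_of_neg h
    have h0 : 0 < -t := by linarith
    have h2' : -t ≤ Real.pi/2 := by rw [← ha]; exact h2
    have heq : Real.sin t / t = Real.sin (-t) / (-t) := by
      rw [Real.sin_neg]; field_simp
    have heq2 : (-t)^2 = t^2 := by ring
    refine ⟨?_, ?_⟩
    · rw [heq, ← heq2]; exact key_pos h0 h2'
    · rw [heq]; exact sinc_pos h0 h2'
  · have h2' : t ≤ Real.pi/2 := (le_abs_self t).trans h2
    exact ⟨key_pos h h2', sinc_pos h h2'⟩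

/-- `log(sin t / t) ≤ −t²/6` for `0 < |t| ≤ π/2`; consequently, for `m ≥ 1` and
`|x| ≤ m/2`, `(sin(xπ/m)/(xπ/m))^m ≤ exp(−x²π²/(6m))`. -/
theorem log_sinc_le_and_gaussian_bound :
    (∀ t : ℝ, |t| ≤ Real.pi / 2 → t ≠ 0 →
      Real.log (Real.sin t / t) ≤ -t ^ 2 / 6) ∧
    (∀ m : ℕ, 1 ≤ m → ∀ x : ℝ, |x| ≤ (m : ℝ) / 2 →
      (Real.sin (x * Real.pi / m) / (x * Real.pi / m)) ^ m ≤
        Real.exp (-(x ^ 2 * Real.pi ^ 2) / (6 * m))) := by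
  constructor
  · intro t ht hne
    obtain ⟨hle, hpos⟩ := key_all ht hne
    exact (Real.log_le_iff_le_exp hpos).mpr hle
  · intro m hm x hx
    have hmpos : (0:ℝ) < m := by exact_mod_cast hm
    rcases eq_or_ne x 0 with rfl | hxne
    · simp [Real.exp_nonneg, zero_pow (by omega : m ≠ 0)]

    · set t := x * Real.pi / m with htdef
      have hpi := Real.pi_pos
      have htne : t ≠ 0 := by
        simp [htdef, div_eq_zero_iff, mul_eq_zero, hxne, Real.pi_ne_zero, hmpos.ne']
      have hta : |t| ≤ Real.pi / 2 := by
        rw [htdef, abs_div, abs_mul, abs_of_pos hpi, abs_of_pos hmpos]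
        rw [div_le_div_iff₀ hmpos (by norm_num : (0:ℝ) < 2)]
        calc |x| * Real.pi * 2 ≤ ((m:ℝ)/2) * Real.pi * 2 := by
              apply mul_le_mul_of_nonneg_right (mul_le_mul_of_nonneg_right hx hpi.le) (by norm_num)
          _ = Real.pi * m := by ring
      obtain ⟨hle, hpos⟩ := key_all hta htne
      calc (Real.sin t / t) ^ m ≤ (Real.exp (-t^2/6)) ^ m :=
            pow_le_pow_left₀ hpos.le hle m
        _ = Real.exp (m * (-t^2/6)) := by rw [← Real.exp_nat_mul]
        _ = Real.exp (-(x ^ 2 * Real.pi ^ 2) / (6 * m)) := by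
            congr 1
            rw [htdef]
            field_simp
end

section
/- The m-th cardinal B-spline satisfies the explicit formula B_m(x) = (1/(m−1)!) · ∑_{p=0}^{m} (−1)^p · C(m,p) · max(0, x + m/2 − p)^{m−1} for all real x and integers m ≥ 1. -/
open Real MeasureTheory

/-- The `m`-th cardinal B-spline: `B_1` is the indicator of `[−1/2, 1/2)` and
`B_m = B_1 ∗ B_{m−1}`. -/
noncomputable def cardinalBspline : ℕ → ℝ → ℝ
  | 0, _ => 0
  | 1, x => if -(1 / 2 : ℝ) ≤ x ∧ x < (1 / 2 : ℝ) then 1 else 0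
  | (m + 2), x => ∫ y : ℝ, cardinalBspline 1 y * cardinalBspline (m + 1) (x - y)

/-- Truncated power function `t₊^k`, with the convention `t₊^0 = [t ≥ 0]`. -/
noncomputable def truncPow (t : ℝ) (k : ℕ) : ℝ := if 0 ≤ t then t ^ k else 0

lemma truncPow_succ_eq (k : ℕ) (t : ℝ) : truncPow t (k+1) = (max t 0)^(k+1) := by
  unfold truncPow
  rcases le_or_gt 0 t with h | h
  · rw [if_pos h, max_eq_left h]
  · rw [if_neg (not_le.2 h), max_eq_right h.le, zero_pow (Nat.succ_ne_zero k)]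

lemma continuous_truncPow_succ (k : ℕ) :
    Continuous fun t : ℝ => truncPow t (k+1) / (k+1) := by
  have : (fun t : ℝ => truncPow t (k+1) / (k+1)) = fun t => (max t 0)^(k+1) / ((k:ℝ)+1) := by
    funext t; rw [truncPow_succ_eq]
  rw [this]
  exact ((continuous_id.max continuous_const).pow _).div_const _

lemma intervalIntegrable_truncPow (k : ℕ) (a b : ℝ) :
    IntervalIntegrable (fun t => truncPow t k) volume a b := by
  have h : (fun t : ℝ => truncPow t k) = Set.indicator (Set.Ici (0:ℝ)) (fun t => t ^ k) := by
    funext t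
    simp [truncPow, Set.indicator, Set.mem_Ici]
  rw [intervalIntegrable_iff, h]
  exact ((continuous_pow k).intervalIntegrable a b).def'.indicator measurableSet_Ici

lemma hasDerivWithinAt_truncPow (k : ℕ) (t : ℝ) :
    HasDerivWithinAt (fun s => truncPow s (k+1) / (k+1)) (truncPow t k) (Set.Ioi t) t := by
  rcases lt_trichotomy t 0 with ht | ht | ht
  · have h0 : HasDerivAt (fun s : ℝ => truncPow s (k+1) / (k+1)) 0 t := by
      refine (hasDerivAt_const t (0:ℝ)).congr_of_eventuallyEq ?_
      filter_upwards [Iio_mem_nhds ht] with s hs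
      simp [truncPow, not_le.2 (show s < 0 from hs)]
    have : truncPow t k = 0 := by simp [truncPow, not_le.2 ht]
    rw [this]
    exact h0.hasDerivWithinAt
  · subst ht
    have hp : HasDerivAt (fun s : ℝ => s^(k+1) / (k+1)) (truncPow 0 k) 0 := by
      have := (hasDerivAt_pow (k+1) (0:ℝ)).div_const ((k:ℝ)+1)
      refine this.congr_deriv ?_; symm
      have hk : ((k:ℝ)+1) ≠ 0 := by positivity
      field_simp [truncPow]
      simp [truncPow, mul_comm]
    refine hp.hasDerivWithinAt.congr ?_ ?_
    · intro s hs
      simp [truncPow, le_of_lt (show (0:ℝ) < s from hs)]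
    · simp [truncPow]
  · have h0 : HasDerivAt (fun s : ℝ => truncPow s (k+1) / (k+1)) (truncPow t k) t := by
      have hp := (hasDerivAt_pow (k+1) t).div_const ((k:ℝ)+1)
      have hp2 : HasDerivAt (fun s : ℝ => s^(k+1) / ((k:ℝ)+1)) (truncPow t k) t := by
        refine hp.congr_deriv ?_; symm
        have hk : ((k:ℝ)+1) ≠ 0 := by positivity
        simp only [truncPow, if_pos ht.le]
        push_cast
        field_simp
      refine hp2.congr_of_eventuallyEq ?_
      filter_upwards [Ioi_mem_nhds ht] with s hs
      simp [truncPow, le_of_lt (show (0:ℝ) < s from hs)]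
    exact h0.hasDerivWithinAt

lemma integral_truncPow (k : ℕ) (a b : ℝ) (hab : a ≤ b) :
    ∫ t in a..b, truncPow t k = (truncPow b (k+1) - truncPow a (k+1)) / (k+1) := by
  have h := intervalIntegral.integral_eq_sub_of_hasDeriv_right_of_le hab
    ((continuous_truncPow_succ k).continuousOn)
    (fun t _ => hasDerivWithinAt_truncPow k t)
    (intervalIntegrable_truncPow k a b)
  rw [h]; ring

lemma abel_sum (n : ℕ) (T : ℕ → ℝ) :
    ∑ p ∈ Finset.range (n+1), (-1:ℝ)^p * (n.choose p : ℝ) * (T p - T (p+1))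
      = ∑ p ∈ Finset.range (n+2), (-1:ℝ)^p * ((n+1).choose p : ℝ) * T p := by
  have hsplit : ∀ p, (-1:ℝ)^p * (n.choose p : ℝ) * (T p - T (p+1))
      = (-1:ℝ)^p * (n.choose p : ℝ) * T p - (-1:ℝ)^p * (n.choose p : ℝ) * T (p+1) := by
    intro p; ring
  simp only [hsplit, Finset.sum_sub_distrib]
  rw [Finset.sum_range_succ' (fun p => (-1:ℝ)^p * ((n+1).choose p : ℝ) * T p) (n+1)]
  rw [Finset.sum_range_succ' (fun p => (-1:ℝ)^p * (n.choose p : ℝ) * T p) n]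
  have hC : ∑ q ∈ Finset.range n, (-1:ℝ)^(q+1) * (n.choose (q+1) : ℝ) * T (q+1)
      = ∑ q ∈ Finset.range (n+1), (-1:ℝ)^(q+1) * (n.choose (q+1) : ℝ) * T (q+1) := by
    rw [Finset.sum_range_succ]
    simp [Nat.choose_succ_self]
  rw [hC, add_sub_right_comm, ← Finset.sum_sub_distrib]
  refine congrArg₂ (· + ·) (Finset.sum_congr rfl fun q _ => ?_) (by norm_num)
  rw [Nat.choose_succ_succ]
  push_cast
  ring

/-- Explicit formula for the cardinal B-spline:
`B_m(x) = (1/(m−1)!) · ∑_{p=0}^{m} (−1)^p · C(m,p) · max(0, x + m/2 − p)^{m−1}`. -/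
theorem cardinalBspline_explicit_formula (m : ℕ) (hm : 1 ≤ m) (x : ℝ) :
    cardinalBspline m x =
      (1 / ((m - 1).factorial : ℝ)) *
        ∑ p ∈ Finset.range (m + 1),
          (-1 : ℝ) ^ p * (m.choose p : ℝ) * truncPow (x + (m : ℝ) / 2 - (p : ℝ)) (m - 1) := by
  induction m, hm using Nat.le_induction generalizing x with
  | base =>
    simp [cardinalBspline, truncPow, Finset.sum_range_succ]
    split_ifs with h1 h2 h3 h2 h3 h3 <;> norm_num at * <;>
      first
      | linarith
      | linarith [h1 (by linarith)]
  | succ n hn ih =>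
    obtain ⟨k, rfl⟩ : ∃ k, n = k + 1 := ⟨n - 1, (Nat.succ_pred_eq_of_pos hn).symm⟩
    -- reduce convolution to an interval integral
    have e1 : ∀ y : ℝ, cardinalBspline 1 y * cardinalBspline (k+1) (x - y)
        = Set.indicator (Set.Ico (-(1/2):ℝ) (1/2))
            (fun y => cardinalBspline (k+1) (x - y)) y := by
      intro y
      simp only [cardinalBspline, Set.indicator_apply, Set.mem_Ico]
      split_ifs with h <;> simp
    have step1 : cardinalBspline (k+1+1) x
        = ∫ y in (-(1/2):ℝ)..(1/2), cardinalBspline (k+1) (x - y) := by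
      rw [show cardinalBspline (k+1+1) x
          = ∫ y : ℝ, cardinalBspline 1 y * cardinalBspline (k+1) (x - y) from by
        rw [show k+1+1 = k+2 from rfl, cardinalBspline]]
      simp only [e1]
      rw [integral_indicator measurableSet_Ico, integral_Ico_eq_integral_Ioo,
        ← integral_Ioc_eq_integral_Ioo, ← intervalIntegral.integral_of_le (by norm_num)]
    rw [step1, intervalIntegral.integral_comp_sub_left (cardinalBspline (k+1)) x]
    simp only [ih, Nat.add_sub_cancel]
    rw [intervalIntegral.integral_const_mul]
    rw [intervalIntegral.integral_finset_sum (fun p _ => by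
      have h1 : IntervalIntegrable (fun u : ℝ => truncPow (u + (((k:ℕ)+1:ℕ):ℝ)/2 - (p:ℝ)) k)
          volume (x - 1/2) (x - -(1/2)) := by
        have h2 := (intervalIntegrable_truncPow k
          ((x - 1/2) + ((((k:ℕ)+1:ℕ):ℝ)/2 - (p:ℝ))) ((x - -(1/2)) + ((((k:ℕ)+1:ℕ):ℝ)/2 - (p:ℝ)))).comp_add_right
          ((((k:ℕ)+1:ℕ):ℝ)/2 - (p:ℝ))
        simpa [add_sub_assoc] using h2
      exact h1.const_mul _)]
    -- per-term evaluation
    have term_eval : ∀ p ∈ Finset.range (k+1+1),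
        (∫ u in (x - 1/2)..(x - -(1/2)),
          (-1:ℝ)^p * (((k+1).choose p : ℕ):ℝ) * truncPow (u + (((k:ℕ)+1:ℕ):ℝ)/2 - (p:ℝ)) k)
        = (-1:ℝ)^p * (((k+1).choose p : ℕ):ℝ) *
            ((truncPow (x + ((k:ℝ)+2)/2 - ((p:ℝ)+0)) (k+1)
              - truncPow (x + ((k:ℝ)+2)/2 - ((p:ℝ)+1)) (k+1)) / ((k:ℝ)+1)) := by
      intro p _
      rw [intervalIntegral.integral_const_mul]
      congr 1
      have harr : (fun u : ℝ => truncPow (u + (((k:ℕ)+1:ℕ):ℝ)/2 - (p:ℝ)) k)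
          = fun u : ℝ => truncPow (u + ((((k:ℕ)+1:ℕ):ℝ)/2 - (p:ℝ))) k := by
        funext u; ring_nf
      rw [show (∫ u in (x - 1/2)..(x - -(1/2)),
            truncPow (u + (((k:ℕ)+1:ℕ):ℝ)/2 - (p:ℝ)) k)
          = ∫ u in (x - 1/2)..(x - -(1/2)),
            truncPow (u + ((((k:ℕ)+1:ℕ):ℝ)/2 - (p:ℝ))) k from by rw [harr]]
      rw [intervalIntegral.integral_comp_add_right (fun t => truncPow t k)]
      rw [integral_truncPow k _ _ (by push_cast; linarith)]
      push_cast
      ring_nf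
    rw [Finset.sum_congr rfl term_eval]
    -- now pure algebra
    have key := abel_sum (k+1) (fun p => truncPow (x + ((k:ℝ)+2)/2 - (p:ℝ)) (k+1))
    have hfac : (((k+1+1) - 1).factorial : ℝ) = ((k:ℝ)+1) * ((k).factorial : ℝ) := by
      push_cast [Nat.factorial_succ]
      norm_num
    have hrw : ∀ p, (-1:ℝ)^p * (((k+1).choose p : ℕ):ℝ) *
        ((truncPow (x + ((k:ℝ)+2)/2 - ((p:ℝ)+0)) (k+1)
          - truncPow (x + ((k:ℝ)+2)/2 - ((p:ℝ)+1)) (k+1)) / ((k:ℝ)+1))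
        = (1/((k:ℝ)+1)) * ((-1:ℝ)^p * (((k+1).choose p : ℕ):ℝ) *
            ((fun q : ℕ => truncPow (x + ((k:ℝ)+2)/2 - (q:ℝ)) (k+1)) p
              - (fun q : ℕ => truncPow (x + ((k:ℝ)+2)/2 - (q:ℝ)) (k+1)) (p+1))) := by
      intro p
      push_cast
      ring_nf
    simp only [hrw]
    rw [← Finset.mul_sum, ← mul_assoc, key]
    have hk0 : ((k:ℝ)+1) ≠ 0 := by positivity
    have hf0 : (k.factorial : ℝ) ≠ 0 := Nat.cast_ne_zero.2 k.factorial_ne_zero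
    have hcoef : 1 / (k.factorial : ℝ) * (1/((k:ℝ)+1)) = 1 / (((k+1).factorial : ℕ) : ℝ) := by
      rw [Nat.factorial_succ]
      push_cast
      field_simp
    rw [hcoef]
    congr 1
    apply Finset.sum_congr rfl
    intro p _
    push_cast
    ring_nf
end

section
/- Greedy segmentation is optimal: suppose for each dyadic-aligned segment [a, b) (with b − a a power of 2 and a divisible by b − a) a monotone feasibility predicate Feas([a,b)) is given, meaning Feas holds for a segment implies it holds for every dyadic-aligned subsegment. Then the partition of [0, N) (N a power of 2) produced by greedily choosing, from right to left, the largest feasible dyadic-aligned segment ending at the current right endpoint, has the minimum possible number of segments among all partitions of [0, N) into feasible dyadic-aligned segments. -/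
/-- A dyadic-aligned segment `[a, a + L)`: `L` is a power of two dividing `a`. -/
def DyadicAligned (a L : ℕ) : Prop := (∃ l : ℕ, L = 2 ^ l) ∧ L ∣ a

private lemma pow2_dvd_of_le {l n L : ℕ} (hl : L = 2 ^ l) (h : L ≤ 2 ^ n) : L ∣ 2 ^ n := by
  subst hl
  exact pow_dvd_pow 2 ((Nat.pow_le_pow_iff_right (by norm_num)).mp h)

/-- Cut points are (strictly) decreasing. -/
private lemma cuts_add_le (c : ℕ → ℕ) (S : ℕ) (h : ∀ j < S, c (j + 1) < c j) :
    ∀ j ≤ S, ∀ i ≤ j, c j + (j - i) ≤ c i := by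
  intro j hj
  induction j with
  | zero => intro i hi; interval_cases i; simp
  | succ k ihk =>
    intro i hi
    rcases Nat.eq_or_lt_of_le hi with rfl | hi'
    · simp
    · have h1 := h k (by omega)
      have h2 := ihk (by omega) i (by omega)
      omega

/-- Every segment of a feasible partition of `[0, 2^(n+1))` lies in one half,
provided the full interval is infeasible. -/
private lemma cross_lemma (n : ℕ) (Feas : ℕ → ℕ → Prop) (c : ℕ → ℕ) (S : ℕ)
    (hc0 : c 0 = 2 ^ (n + 1))
    (hpart : ∀ j < S, c (j + 1) < c j ∧
      DyadicAligned (c (j + 1)) (c j - c (j + 1)) ∧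
      Feas (c (j + 1)) (c j - c (j + 1)))
    (hfeas : ¬ Feas 0 (2 ^ (n + 1))) :
    ∀ j < S, 2 ^ n ≤ c (j + 1) ∨ c j ≤ 2 ^ n := by
  have hmono := cuts_add_le c S (fun j hj => (hpart j hj).1)
  intro j hj
  by_contra hcon
  push_neg at hcon
  obtain ⟨h1, h2⟩ := hcon
  obtain ⟨hlt, ⟨⟨l, hl⟩, hdvd⟩, hf⟩ := hpart j hj
  have hcjN : c j + j ≤ 2 ^ (n + 1) := by
    have := hmono j (by omega) 0 (by omega); omega
  have hpow : 2 ^ (n + 1) = 2 ^ n + 2 ^ n := by rw [pow_succ]; ring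
  rcases le_or_gt (c j - c (j + 1)) (2 ^ n) with hle | hgt
  · -- small segment starting below the midpoint would end below the midpoint
    have hdvdM : (c j - c (j + 1)) ∣ 2 ^ n := pow2_dvd_of_le hl hle
    have hdvd2 : (c j - c (j + 1)) ∣ (2 ^ n - c (j + 1)) := Nat.dvd_sub hdvdM hdvd
    have hposgap : 0 < 2 ^ n - c (j + 1) := by omega
    have := Nat.le_of_dvd hposgap hdvd2
    omega
  · -- the segment is the whole interval, contradicting infeasibility
    have hj0 : c (j + 1) = 0 ∧ c j = 2 ^ (n + 1) := by
      have hlgt : 2 ^ (n + 1) ≤ c j - c (j + 1) := by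
        have hln : ¬ (2:ℕ) ^ l ≤ 2 ^ n := by omega
        have : n + 1 ≤ l := by
          by_contra hc
          exact hln (Nat.pow_le_pow_right (by norm_num) (by omega))
        calc 2 ^ (n + 1) ≤ 2 ^ l := Nat.pow_le_pow_right (by norm_num) this
        _ = c j - c (j + 1) := hl.symm
      omega
    rw [hj0.1, hj0.2] at hf
    simpa using hfeas hf

/-- The main induction: greedy uses the fewest segments, for `N = 2 ^ n`. -/
private lemma greedy_aux : ∀ (n : ℕ) (Feas : ℕ → ℕ → Prop),
    (∀ a L a' L', DyadicAligned a L → DyadicAligned a' L' →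
      a ≤ a' → a' + L' ≤ a + L → Feas a L → Feas a' L') →
    ∀ (c : ℕ → ℕ) (S : ℕ), c 0 = 2 ^ n → c S = 0 →
    (∀ j < S, c (j + 1) < c j ∧
      DyadicAligned (c (j + 1)) (c j - c (j + 1)) ∧
      Feas (c (j + 1)) (c j - c (j + 1))) →
    (∀ j < S, ∀ L', L' ≤ c j → c j - c (j + 1) < L' →
      DyadicAligned (c j - L') L' → ¬ Feas (c j - L') L') →
    ∀ (c' : ℕ → ℕ) (S' : ℕ), c' 0 = 2 ^ n → c' S' = 0 →
    (∀ j < S', c' (j + 1) < c' j ∧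
      DyadicAligned (c' (j + 1)) (c' j - c' (j + 1)) ∧
      Feas (c' (j + 1)) (c' j - c' (j + 1))) →
    S ≤ S' := by
  intro n
  induction n with
  | zero =>
    intro Feas mono c S hc0 hcS hpart hgreedy c' S' hc'0 hc'S hpart'
    have hS' : 1 ≤ S' := by
      by_contra h
      have : S' = 0 := by omega
      rw [this] at hc'S
      simp [hc'S] at hc'0
    have hS : S ≤ 1 := by
      by_contra h
      push_neg at h
      have h0 : c 1 < c 0 := (hpart 0 (by omega)).1
      have h1 : c 2 < c 1 := (hpart 1 (by omega)).1
      simp at hc0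
      omega
    omega
  | succ n ih =>
    intro Feas mono c S hc0 hcS hpart hgreedy c' S' hc'0 hc'S hpart'
    have hNpos : 0 < 2 ^ (n + 1) := Nat.pow_pos (by norm_num)
    have hpow : 2 ^ (n + 1) = 2 ^ n + 2 ^ n := by rw [pow_succ]; ring
    have hS : 1 ≤ S := by
      by_contra h
      have : S = 0 := by omega
      rw [this] at hcS; omega
    have hS' : 1 ≤ S' := by
      by_contra h
      have : S' = 0 := by omega
      rw [this] at hc'S; omega
    have hmono := cuts_add_le c S (fun j hj => (hpart j hj).1)
    have hmono' := cuts_add_le c' S' (fun j hj => (hpart' j hj).1)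
    by_cases hfeas : Feas 0 (2 ^ (n + 1))
    · -- greedy takes the whole interval: S = 1
      have hlt0 : c 1 < c 0 := (hpart 0 hS).1
      have hc1 : c 1 = 0 := by
        by_contra h1
        refine hgreedy 0 hS (2 ^ (n + 1)) (by omega) ?_ ?_ ?_
        · show c 0 - c 1 < 2 ^ (n + 1)
          omega
        · exact ⟨⟨n + 1, rfl⟩, by rw [hc0]; simp⟩
        · have h00 : c 0 - 2 ^ (n + 1) = 0 := by omega
          rw [h00]; exact hfeas
      have : S ≤ 1 := by
        by_contra h
        push_neg at h
        have h1 : c 2 < c 1 := (hpart 1 (by omega)).1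
        omega
      omega
    · -- both partitions split at the midpoint
      have cross := cross_lemma n Feas c S hc0 hpart hfeas
      have cross' := cross_lemma n Feas c' S' hc'0 hpart' hfeas
      -- the greedy midpoint index
      have hexP : ∃ i, c i ≤ 2 ^ n := ⟨S, by omega⟩
      set P := Nat.find hexP with hPdef
      have hPspec : c P ≤ 2 ^ n := Nat.find_spec hexP
      have hPle : P ≤ S := Nat.find_min' hexP (by omega)
      have hP1 : 1 ≤ P := by
        rcases Nat.eq_zero_or_pos P with h | h
        · rw [h] at hPspec; omega
        · omega
      have hPprev : ¬ c (P - 1) ≤ 2 ^ n := Nat.find_min hexP (by omega)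
      have hcP : c P = 2 ^ n := by
        have hcr := cross (P - 1) (by omega)
        have hPeq : P - 1 + 1 = P := by omega
        rw [hPeq] at hcr
        omega
      -- the competitor midpoint index
      have hexP' : ∃ i, c' i ≤ 2 ^ n := ⟨S', by omega⟩
      set P' := Nat.find hexP' with hP'def
      have hP'spec : c' P' ≤ 2 ^ n := Nat.find_spec hexP'
      have hP'le : P' ≤ S' := Nat.find_min' hexP' (by omega)
      have hP'1 : 1 ≤ P' := by
        rcases Nat.eq_zero_or_pos P' with h | h
        · rw [h] at hP'spec; omega
        · omega
      have hP'prev : ¬ c' (P' - 1) ≤ 2 ^ n := Nat.find_min hexP' (by omega)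
      have hcP' : c' P' = 2 ^ n := by
        have hcr := cross' (P' - 1) (by omega)
        have hP'eq : P' - 1 + 1 = P' := by omega
        rw [hP'eq] at hcr
        omega
      -- basic bounds
      have hcub : ∀ j ≤ S, c j ≤ 2 ^ (n + 1) := by
        intro j hj; have := hmono j hj 0 (by omega); omega
      have hclb : ∀ j ≤ P, 2 ^ n ≤ c j := by
        intro j hj; have := hmono P hPle j hj; omega
      have hc'ub : ∀ j ≤ S', c' j ≤ 2 ^ (n + 1) := by
        intro j hj; have := hmono' j hj 0 (by omega); omega
      have hc'lb : ∀ j ≤ P', 2 ^ n ≤ c' j := by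
        intro j hj; have := hmono' P' hP'le j hj; omega
      -- lower halves: apply IH with Feas itself
      have hlow : S - P ≤ S' - P' := by
        refine ih Feas mono (fun j => c (P + j)) (S - P) (by simpa using hcP)
          ?_ ?_ ?_ (fun j => c' (P' + j)) (S' - P') (by simpa using hcP') ?_ ?_
        · have : P + (S - P) = S := by omega
          simpa [this] using hcS
        · intro j hj
          exact hpart (P + j) (by omega)
        · intro j hj L' h1 h2 h3
          exact hgreedy (P + j) (by omega) L' h1 h2 h3
        · have : P' + (S' - P') = S' := by omega
          simpa [this] using hc'S
        · intro j hj
          exact hpart' (P' + j) (by omega)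
      -- upper halves: apply IH with shifted, truncated predicate
      have hup : P ≤ P' := by
        set F2 : ℕ → ℕ → Prop := fun a L => Feas (a + 2 ^ n) L ∧ L ≤ 2 ^ n with hF2
        have mono2 : ∀ a L a' L', DyadicAligned a L → DyadicAligned a' L' →
            a ≤ a' → a' + L' ≤ a + L → F2 a L → F2 a' L' := by
          rintro a L a' L' ⟨⟨l, hl⟩, hd⟩ ⟨⟨l', hl'⟩, hd'⟩ hle hle2 ⟨hf, hLM⟩
          have hL'L : L' ≤ L := by omega
          refine ⟨?_, by omega⟩
          refine mono (a + 2 ^ n) L (a' + 2 ^ n) L' ⟨⟨l, hl⟩, ?_⟩ ⟨⟨l', hl'⟩, ?_⟩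
            (by omega) (by omega) hf
          · exact dvd_add hd (pow2_dvd_of_le hl hLM)
          · exact dvd_add hd' (pow2_dvd_of_le hl' (by omega))
        refine ih F2 mono2 (fun j => c j - 2 ^ n) P
          (by show c 0 - 2 ^ n = 2 ^ n; omega)
          (by show c P - 2 ^ n = 0; omega) ?_ ?_ (fun j => c' j - 2 ^ n) P'
          (by show c' 0 - 2 ^ n = 2 ^ n; omega)
          (by show c' P' - 2 ^ n = 0; omega) ?_
        · -- greedy upper partition
          intro j hj
          obtain ⟨hlt, ⟨⟨l, hl⟩, hdvd⟩, hf⟩ := hpart j (by omega)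
          have h1 : 2 ^ n ≤ c (j + 1) := hclb (j + 1) (by omega)
          have h2 : c j ≤ 2 ^ (n + 1) := hcub j (by omega)
          have hkey : (c j - 2 ^ n) - (c (j + 1) - 2 ^ n) = c j - c (j + 1) := by omega
          show c (j + 1) - 2 ^ n < c j - 2 ^ n ∧
            DyadicAligned (c (j + 1) - 2 ^ n) ((c j - 2 ^ n) - (c (j + 1) - 2 ^ n)) ∧
            F2 (c (j + 1) - 2 ^ n) ((c j - 2 ^ n) - (c (j + 1) - 2 ^ n))
          rw [hkey]
          have hLle : c j - c (j + 1) ≤ 2 ^ n := by omega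
          refine ⟨by omega, ⟨⟨l, hl⟩, Nat.dvd_sub hdvd (pow2_dvd_of_le hl hLle)⟩, ?_⟩
          show Feas (c (j + 1) - 2 ^ n + 2 ^ n) (c j - c (j + 1)) ∧ c j - c (j + 1) ≤ 2 ^ n
          have he : c (j + 1) - 2 ^ n + 2 ^ n = c (j + 1) := by omega
          rw [he]; exact ⟨hf, hLle⟩
        · -- greediness for the upper greedy partition
          intro j hj L' hL'le0 hL'gt0 hal0 hF2f0
          have hL'le : L' ≤ c j - 2 ^ n := hL'le0
          have hL'gt : (c j - 2 ^ n) - (c (j + 1) - 2 ^ n) < L' := hL'gt0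
          have hal : DyadicAligned ((c j - 2 ^ n) - L') L' := hal0
          have hF2f : Feas ((c j - 2 ^ n) - L' + 2 ^ n) L' ∧ L' ≤ 2 ^ n := hF2f0
          obtain ⟨⟨l', hl'⟩, hdvd'⟩ := hal
          obtain ⟨hf', _⟩ := hF2f
          have h1 : 2 ^ n ≤ c (j + 1) := hclb (j + 1) (by omega)
          have h1' : 2 ^ n ≤ c j := hclb j (by omega)
          have h2 : c j ≤ 2 ^ (n + 1) := hcub j (by omega)
          have hL'M : L' ≤ 2 ^ n := by omega
          have he : c j - 2 ^ n - L' + 2 ^ n = c j - L' := by omega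
          refine hgreedy j (by omega) L' (by omega) (by omega) ⟨⟨l', hl'⟩, ?_⟩ ?_
          · rw [← he]
            exact dvd_add hdvd' (pow2_dvd_of_le hl' hL'M)
          · rw [he] at hf'; exact hf'
        · -- competitor upper partition
          intro j hj
          obtain ⟨hlt, ⟨⟨l, hl⟩, hdvd⟩, hf⟩ := hpart' j (by omega)
          have h1 : 2 ^ n ≤ c' (j + 1) := hc'lb (j + 1) (by omega)
          have h2 : c' j ≤ 2 ^ (n + 1) := hc'ub j (by omega)
          have hkey : (c' j - 2 ^ n) - (c' (j + 1) - 2 ^ n) = c' j - c' (j + 1) := by omega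
          show c' (j + 1) - 2 ^ n < c' j - 2 ^ n ∧
            DyadicAligned (c' (j + 1) - 2 ^ n) ((c' j - 2 ^ n) - (c' (j + 1) - 2 ^ n)) ∧
            F2 (c' (j + 1) - 2 ^ n) ((c' j - 2 ^ n) - (c' (j + 1) - 2 ^ n))
          rw [hkey]
          have hLle : c' j - c' (j + 1) ≤ 2 ^ n := by omega
          refine ⟨by omega, ⟨⟨l, hl⟩, Nat.dvd_sub hdvd (pow2_dvd_of_le hl hLle)⟩, ?_⟩
          show Feas (c' (j + 1) - 2 ^ n + 2 ^ n) (c' j - c' (j + 1)) ∧ c' j - c' (j + 1) ≤ 2 ^ n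
          have he : c' (j + 1) - 2 ^ n + 2 ^ n = c' (j + 1) := by omega
          rw [he]; exact ⟨hf, hLle⟩
      omega

/-- Greedy segmentation is optimal: given a feasibility predicate on dyadic-aligned
segments that is downward-closed under taking dyadic-aligned subsegments, any
greedy partition of `[0, N)` (choosing, from right to left, the largest feasible
dyadic-aligned segment ending at the current right endpoint) uses the minimum
possible number of segments among all partitions into feasible dyadic-aligned
segments. -/
theorem greedy_segmentation_optimal (N n : ℕ) (hN : N = 2 ^ n)
    (Feas : ℕ → ℕ → Prop)
    (mono : ∀ a L a' L', DyadicAligned a L → DyadicAligned a' L' →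
      a ≤ a' → a' + L' ≤ a + L → Feas a L → Feas a' L')
    -- the greedy partition, given by cut points `N = c 0 > c 1 > ⋯ > c S = 0`
    (c : ℕ → ℕ) (S : ℕ) (hc0 : c 0 = N) (hcS : c S = 0)
    (hpart : ∀ j < S, c (j + 1) < c j ∧
      DyadicAligned (c (j + 1)) (c j - c (j + 1)) ∧
      Feas (c (j + 1)) (c j - c (j + 1)))
    -- greediness: no strictly larger feasible dyadic-aligned segment ends at `c j`
    (hgreedy : ∀ j < S, ∀ L', L' ≤ c j → c j - c (j + 1) < L' →
      DyadicAligned (c j - L') L' → ¬ Feas (c j - L') L')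
    -- an arbitrary competing partition
    (c' : ℕ → ℕ) (S' : ℕ) (hc'0 : c' 0 = N) (hc'S : c' S' = 0)
    (hpart' : ∀ j < S', c' (j + 1) < c' j ∧
      DyadicAligned (c' (j + 1)) (c' j - c' (j + 1)) ∧
      Feas (c' (j + 1)) (c' j - c' (j + 1))) :
    S ≤ S' := by
  subst hN
  exact greedy_aux n Feas mono c S hc0 hcS hpart hgreedy c' S' hc'0 hc'S hpart'
end
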